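/- arXiv:1407.4485 — 2 statements merged into one kernel-verified Lean document; each statement's English description precedes it below -/
import Mathlib

section
/- If a split S' of 2n points is obtained from a split S by a single split move, then for every split T of the same 2n points, ‖S',T‖ equals either ‖S,T‖ + 1 or ‖S,T‖ − 1. -/
attribute [local instance] Classical.propDecidable

namespace MultiCrossing

/-- `x` lies strictly in the open clockwise arc from `a` to `b` on the circle `ZMod (2*n)`. -/
def StrictBtw (n : ℕ) (a b x : ZMod (2 * n)) : Prop :=
  0 < (x - a).val ∧ (x - a).val < (b - a).val

/-- Two chords (with four distinct endpoints) cross: exactly one of the endpoints of one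
chord lies in the open clockwise arc strictly between the endpoints of the other. -/
def Crosses (n : ℕ) (e f : Finset (ZMod (2 * n))) : Prop :=
  ∃ a b c d : ZMod (2 * n), e = {a, b} ∧ f = {c, d} ∧ a ≠ b ∧ c ≠ d ∧
    Disjoint e f ∧ Xor' (StrictBtw n a b c) (StrictBtw n a b d)

/-- A split: a non-crossing perfect matching of the `2*n` points `ZMod (2*n)`. -/
structure IsSplit (n : ℕ) (S : Finset (Finset (ZMod (2 * n)))) : Prop where
  card_two : ∀ e ∈ S, e.card = 2
  partitions : ∀ x : ZMod (2 * n), ∃! e, e ∈ S ∧ x ∈ e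
  noncrossing : ∀ e ∈ S, ∀ f ∈ S, ¬ Crosses n e f

/-- A split move transforms a split `S` into a different split `S'` sharing exactly
`n - 2` chords with `S`. -/
def SplitMove (n : ℕ) (S S' : Finset (Finset (ZMod (2 * n)))) : Prop :=
  IsSplit n S ∧ IsSplit n S' ∧ S ≠ S' ∧ (S ∩ S').card = n - 2

/-- `ChainLen R k a b` : `b` is reachable from `a` in exactly `k` steps of the relation `R`. -/
def ChainLen {α : Type*} (R : α → α → Prop) : ℕ → α → α → Prop
  | 0, a, b => a = b
  | (k + 1), a, b => ∃ c, R a c ∧ ChainLen R k c b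

/-- The split distance: the minimal number of split moves transforming `S` into `T`. -/
noncomputable def splitDist (n : ℕ) (S T : Finset (Finset (ZMod (2 * n)))) : ℕ :=
  sInf {k | ChainLen (SplitMove n) k S T}

/-- The graph on `ZMod (2*n)` whose edges are the chords of `S` together with those of `T`. -/
def unionGraph (n : ℕ) (S T : Finset (Finset (ZMod (2 * n)))) : SimpleGraph (ZMod (2 * n)) where
  Adj x y := x ≠ y ∧ ∃ e, (e ∈ S ∨ e ∈ T) ∧ x ∈ e ∧ y ∈ e
  symm := by
    constructor
    rintro x y ⟨hxy, e, he, hx, hy⟩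
    exact ⟨Ne.symm hxy, e, he, hy, hx⟩
  loopless := by
    constructor
    rintro x ⟨h, -⟩
    exact h rfl

/-- `‖S,T‖`: the number of connected components (circles) of the multigraph obtained from
the chords of `S` (drawn inside the circle) and the chords of `T` (drawn outside). -/
noncomputable def circleCount (n : ℕ) (S T : Finset (Finset (ZMod (2 * n)))) : ℕ :=
  Nat.card (unionGraph n S T).ConnectedComponent


/-! ### Auxiliary arithmetic on `ZMod (2*n)` -/

section Arith

variable {n : ℕ} [NeZero (2*n)]

lemma val_sub_cases (A B : ZMod (2*n)) :
    (B.val ≤ A.val ∧ (A-B).val = A.val - B.val) ∨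
      (A.val < B.val ∧ (A-B).val = A.val + 2*n - B.val) := by
  have hA := ZMod.val_lt A; have hB := ZMod.val_lt B
  rcases eq_or_ne B 0 with rfl | hB0
  · left; simp
  · have h1 : A - B = A + -B := sub_eq_add_neg A B
    have h2 : (A + -B).val = (A.val + (2*n - B.val)) % (2*n) := by
      rw [ZMod.val_add, ZMod.neg_val, if_neg hB0]
    have hBv : 0 < B.val := Nat.pos_of_ne_zero (fun h => hB0 ((ZMod.val_eq_zero B).1 h))
    rcases le_or_gt B.val A.val with h | h
    · refine Or.inl ⟨h, ?_⟩
      rw [h1, h2]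
      have e : A.val + (2*n - B.val) = (A.val - B.val) + 2*n := by omega
      rw [e, Nat.add_mod_right, Nat.mod_eq_of_lt (by omega)]
    · refine Or.inr ⟨h, ?_⟩
      rw [h1, h2, Nat.mod_eq_of_lt (by omega)]; omega

lemma coordStmt (u p q : ZMod (2*n)) :
    ((q-u).val ≤ (p-u).val ∧ (p-q).val = (p-u).val - (q-u).val) ∨
      ((p-u).val < (q-u).val ∧ (p-q).val = (p-u).val + 2*n - (q-u).val) := by
  have h := val_sub_cases (p-u) (q-u)
  rwa [show (p-u)-(q-u) = p - q by ring] at h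

omit [NeZero (2*n)] in
lemma val_sub_ne_zero {A B : ZMod (2*n)} (h : A ≠ B) : (A - B).val ≠ 0 :=
  fun hv => h (sub_eq_zero.1 ((ZMod.val_eq_zero _).1 hv))

/-- `Sep n u v x y` : the chord `{u,v}` separates `x` from `y`. -/
def Sep (n : ℕ) (u v x y : ZMod (2 * n)) : Prop :=
  Xor' (StrictBtw n u v x) (StrictBtw n u v y)

omit [NeZero (2*n)] in
lemma not_sep_iff {u v x y : ZMod (2*n)} :
    ¬ Sep n u v x y ↔ (StrictBtw n u v x ↔ StrictBtw n u v y) := by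
  unfold Sep Xor' Xor; tauto

lemma sep_symm {u v x y : ZMod (2*n)} (huv : u ≠ v) (hux : u ≠ x) (huy : u ≠ y)
    (hvx : v ≠ x) (hvy : v ≠ y) (hxy : x ≠ y) (h : Sep n u v x y) : Sep n x y u v := by
  unfold Sep Xor' Xor StrictBtw at h ⊢
  have c1 := coordStmt u u x
  have c2 := coordStmt u y x
  have c3 := coordStmt u v x
  have c4 := coordStmt u y v
  have hz : ((u:ZMod (2*n))-u).val = 0 := by simp
  have n1 := val_sub_ne_zero huv.symm
  have n2 := val_sub_ne_zero hux.symm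
  have n3 := val_sub_ne_zero huy.symm
  have n4 := val_sub_ne_zero hux
  have n5 := val_sub_ne_zero hxy.symm
  have n6 := val_sub_ne_zero hvx
  have n7 := val_sub_ne_zero hxy
  have n9 := val_sub_ne_zero (Ne.symm hvy)
  have b1 := ZMod.val_lt (v-u)
  have b2 := ZMod.val_lt (x-u)
  have b3 := ZMod.val_lt (y-u)
  have b4 := ZMod.val_lt (u-x)
  have b5 := ZMod.val_lt (y-x)
  have b6 := ZMod.val_lt (v-x)
  have b7 := ZMod.val_lt (y-v)
  rcases c1 with ⟨e1,e2⟩|⟨e1,e2⟩ <;> rcases c2 with ⟨f1,f2⟩|⟨f1,f2⟩ <;>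
    rcases c3 with ⟨g1,g2⟩|⟨g1,g2⟩ <;> rcases c4 with ⟨k1,k2⟩|⟨k1,k2⟩ <;> omega

lemma third_sep {p1 p2 p3 p4 : ZMod (2*n)} (h12 : p1 ≠ p2) (h13 : p1 ≠ p3) (h14 : p1 ≠ p4)
    (h23 : p2 ≠ p3) (h24 : p2 ≠ p4) (h34 : p3 ≠ p4)
    (he : ¬ Sep n p1 p2 p3 p4) (hf : ¬ Sep n p2 p3 p4 p1) : Sep n p1 p3 p2 p4 := by
  unfold Sep Xor' Xor StrictBtw at he hf ⊢
  have c1 := coordStmt p1 p4 p2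
  have c2 := coordStmt p1 p1 p2
  have c3 := coordStmt p1 p3 p2
  have c4 := coordStmt p1 p4 p3
  have hz : ((p1:ZMod (2*n))-p1).val = 0 := by simp
  have n1 := val_sub_ne_zero h12.symm
  have n2 := val_sub_ne_zero h13.symm
  have n3 := val_sub_ne_zero h14.symm
  have n4 := val_sub_ne_zero h23.symm
  have n5 := val_sub_ne_zero h24.symm
  have n6 := val_sub_ne_zero h34.symm
  have m1 := val_sub_ne_zero h12
  have m4 := val_sub_ne_zero h23
  have m6 := val_sub_ne_zero h34
  have b1 := ZMod.val_lt (p2-p1)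
  have b2 := ZMod.val_lt (p3-p1)
  have b3 := ZMod.val_lt (p4-p1)
  have b4 := ZMod.val_lt (p4-p2)
  have b5 := ZMod.val_lt (p1-p2)
  have b6 := ZMod.val_lt (p3-p2)
  have b7 := ZMod.val_lt (p4-p3)
  rcases c1 with ⟨e1,e2⟩|⟨e1,e2⟩ <;> rcases c2 with ⟨f1,f2⟩|⟨f1,f2⟩ <;>
    rcases c3 with ⟨g1,g2⟩|⟨g1,g2⟩ <;> rcases c4 with ⟨k1,k2⟩|⟨k1,k2⟩ <;> omega

lemma btw_split {u v z x : ZMod (2*n)} (hv : StrictBtw n u z v) (hxv : x ≠ v) :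
    StrictBtw n u z x ↔ (StrictBtw n u v x ∨ StrictBtw n v z x) := by
  unfold StrictBtw at *
  have c1 := coordStmt u x v
  have c2 := coordStmt u z v
  have n1 := val_sub_ne_zero hxv
  have b1 := ZMod.val_lt (v-u)
  have b2 := ZMod.val_lt (z-u)
  have b3 := ZMod.val_lt (x-u)
  have b4 := ZMod.val_lt (x-v)
  have b5 := ZMod.val_lt (z-v)
  rcases c1 with ⟨e1,e2⟩|⟨e1,e2⟩ <;> rcases c2 with ⟨f1,f2⟩|⟨f1,f2⟩ <;> omega

lemma btw_split_excl {u v z x : ZMod (2*n)} (hv : StrictBtw n u z v) :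
    ¬ (StrictBtw n u v x ∧ StrictBtw n v z x) := by
  unfold StrictBtw at *
  have c1 := coordStmt u x v
  have c2 := coordStmt u z v
  have b1 := ZMod.val_lt (v-u)
  have b2 := ZMod.val_lt (z-u)
  have b3 := ZMod.val_lt (x-u)
  have b4 := ZMod.val_lt (x-v)
  have b5 := ZMod.val_lt (z-v)
  rcases c1 with ⟨e1,e2⟩|⟨e1,e2⟩ <;> rcases c2 with ⟨f1,f2⟩|⟨f1,f2⟩ <;> omega

lemma btw_compl {u v x : ZMod (2*n)} (huv : u ≠ v) (hxu : x ≠ u) (hxv : x ≠ v) :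
    StrictBtw n u v x ↔ ¬ StrictBtw n v u x := by
  unfold StrictBtw at *
  have c1 := coordStmt u x v
  have c2 := coordStmt u u v
  have hz : ((u:ZMod (2*n))-u).val = 0 := by simp
  have n1 := val_sub_ne_zero huv.symm
  have n2 := val_sub_ne_zero hxu
  have n3 := val_sub_ne_zero hxv
  have n4 := val_sub_ne_zero huv
  have b1 := ZMod.val_lt (v-u)
  have b2 := ZMod.val_lt (x-u)
  have b3 := ZMod.val_lt (x-v)
  have b4 := ZMod.val_lt (u-v)
  rcases c1 with ⟨e1,e2⟩|⟨e1,e2⟩ <;> rcases c2 with ⟨f1,f2⟩|⟨f1,f2⟩ <;> omega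

lemma val_inj_sub {a b u : ZMod (2*n)} (h : (a-u).val = (b-u).val) : a = b := by
  have h2 : a - u = b - u := ZMod.val_injective _ h
  have h3 : a - u + u = b - u + u := by rw [h2]
  simpa using h3

end Arith


/-! ### Arc finsets and parity -/

section ArcF

variable {n : ℕ} [NeZero (2*n)]

/-- The finset of points strictly between `u` and `v` (clockwise). -/
noncomputable def arcF (n : ℕ) [NeZero (2*n)] (u v : ZMod (2*n)) : Finset (ZMod (2*n)) :=
  Finset.univ.filter (StrictBtw n u v)

@[simp] lemma mem_arcF {u v x : ZMod (2*n)} : x ∈ arcF n u v ↔ StrictBtw n u v x := by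
  simp [arcF]

lemma arcF_self (u : ZMod (2*n)) : arcF n u u = ∅ := by
  ext x
  simp only [mem_arcF, Finset.notMem_empty, iff_false, StrictBtw]
  have : ((u:ZMod (2*n))-u).val = 0 := by simp
  omega

lemma card_inter_arc_compl {Q : Finset (ZMod (2*n))} {u v : ZMod (2*n)}
    (hu : u ∉ Q) (hv : v ∉ Q) (huv : u ≠ v) :
    (Q ∩ arcF n u v).card + (Q ∩ arcF n v u).card = Q.card := by
  classical
  have hdisj : Disjoint (Q ∩ arcF n u v) (Q ∩ arcF n v u) := by
    rw [Finset.disjoint_left]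
    intro x hx hx'
    simp only [Finset.mem_inter, mem_arcF] at hx hx'
    have hxu : x ≠ u := fun h => hu (h ▸ hx.1)
    have hxv : x ≠ v := fun h => hv (h ▸ hx.1)
    exact ((btw_compl huv hxu hxv).1 hx.2) hx'.2
  have hunion : (Q ∩ arcF n u v) ∪ (Q ∩ arcF n v u) = Q := by
    ext x
    simp only [Finset.mem_union, Finset.mem_inter, mem_arcF]
    constructor
    · rintro (⟨h,-⟩|⟨h,-⟩) <;> exact h
    · intro hx
      have hxu : x ≠ u := fun h => hu (h ▸ hx)
      have hxv : x ≠ v := fun h => hv (h ▸ hx)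
      by_cases hb : StrictBtw n u v x
      · exact Or.inl ⟨hx, hb⟩
      · exact Or.inr ⟨hx, by
          by_contra hb2
          exact hb ((btw_compl huv hxu hxv).2 hb2)⟩
  rw [← Finset.card_union_of_disjoint hdisj, hunion]

lemma even_arc_flip {Q : Finset (ZMod (2*n))} {u v : ZMod (2*n)}
    (hQ : Even Q.card) (hu : u ∉ Q) (hv : v ∉ Q) (huv : u ≠ v)
    (h : Even ((Q ∩ arcF n u v).card)) : Even ((Q ∩ arcF n v u).card) := by
  have := card_inter_arc_compl (n := n) hu hv huv
  rcases hQ with ⟨a, ha⟩; rcases h with ⟨b, hb⟩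
  exact ⟨a - b, by omega⟩

lemma arc_split_card {Q : Finset (ZMod (2*n))} {u v z : ZMod (2*n)}
    (hv : StrictBtw n u z v) (hvQ : v ∉ Q) :
    (Q ∩ arcF n u z).card = (Q ∩ arcF n u v).card + (Q ∩ arcF n v z).card := by
  classical
  have hdisj : Disjoint (Q ∩ arcF n u v) (Q ∩ arcF n v z) := by
    rw [Finset.disjoint_left]
    intro x hx hx'
    simp only [Finset.mem_inter, mem_arcF] at hx hx'
    exact btw_split_excl hv ⟨hx.2, hx'.2⟩
  have hunion : Q ∩ arcF n u z = (Q ∩ arcF n u v) ∪ (Q ∩ arcF n v z) := by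
    ext x
    simp only [Finset.mem_union, Finset.mem_inter, mem_arcF]
    constructor
    · rintro ⟨hxQ, hb⟩
      have hxv : x ≠ v := fun h => hvQ (h ▸ hxQ)
      rcases (btw_split hv hxv).1 hb with h | h
      · exact Or.inl ⟨hxQ, h⟩
      · exact Or.inr ⟨hxQ, h⟩
    · rintro (⟨hxQ, hb⟩|⟨hxQ, hb⟩) <;> refine ⟨hxQ, ?_⟩
      · have hxv : x ≠ v := by
          intro h; rw [h] at hxQ; exact hvQ hxQ
        exact (btw_split hv hxv).2 (Or.inl hb)
      · have hxv : x ≠ v := by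
          intro h
          rw [h] at hb
          unfold StrictBtw at hb
          have hz0 : ((v:ZMod (2*n))-v).val = 0 := by simp
          omega
        exact (btw_split hv hxv).2 (Or.inr hb)
  rw [hunion, Finset.card_union_of_disjoint hdisj]

lemma arc_step {Q : Finset (ZMod (2*n))} {u v z : ZMod (2*n)}
    (hQ : Even Q.card) (hu : u ∉ Q) (hv : v ∉ Q) (hz : z ∉ Q)
    (h1 : Even ((Q ∩ arcF n u v).card)) (h2 : Even ((Q ∩ arcF n v z).card)) :
    Even ((Q ∩ arcF n u z).card) := by
  rcases eq_or_ne u z with rfl | huz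
  · simp [arcF_self]
  rcases eq_or_ne u v with rfl | huv
  · exact h2
  rcases eq_or_ne v z with rfl | hvz
  · exact h1
  have hvu : (v - u).val ≠ 0 := val_sub_ne_zero (Ne.symm huv)
  have hzu : (z - u).val ≠ 0 := val_sub_ne_zero (Ne.symm huz)
  rcases lt_trichotomy ((v-u).val) ((z-u).val) with hlt | heq | hgt
  · -- v strictly between u and z
    have hb : StrictBtw n u z v := ⟨by omega, hlt⟩
    rw [arc_split_card hb hv]
    exact Nat.even_add.2 (by tauto)
  · exact absurd (val_inj_sub heq) hvz
  · -- z strictly between u and v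
    have hb : StrictBtw n u v z := ⟨by omega, hgt⟩
    have hsplit := arc_split_card (Q := Q) hb hz
    have h2' : Even ((Q ∩ arcF n z v).card) := even_arc_flip hQ hv hz hvz h2
    rcases h1 with ⟨a, ha⟩; rcases h2' with ⟨b, hb2⟩
    exact ⟨a - b, by omega⟩

end ArcF

/-! ### Even cardinality via fixed-point-free involutions -/

lemma even_card_invol {α : Type*} [DecidableEq α] {F : Finset α} (f : α → α)
    (hmem : ∀ x ∈ F, f x ∈ F) (hinv : ∀ x ∈ F, f (f x) = x) (hne : ∀ x ∈ F, f x ≠ x) :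
    Even F.card := by
  generalize hk : F.card = k
  induction k using Nat.strong_induction_on generalizing F with
  | _ k IH =>
    rcases Finset.eq_empty_or_nonempty F with rfl | ⟨x, hx⟩
    · simp only [Finset.card_empty] at hk
      exact hk ▸ Even.zero
    · have hfx : f x ∈ F := hmem x hx
      have hnex : f x ≠ x := hne x hx
      have h1 : f x ∈ F.erase x := Finset.mem_erase.2 ⟨hnex, hfx⟩
      set F' : Finset α := (F.erase x).erase (f x) with hF'
      have hmem' : ∀ y ∈ F', y ∈ F := by
        intro y hy
        exact Finset.mem_of_mem_erase (Finset.mem_of_mem_erase hy)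
      have hy_ne : ∀ y ∈ F', y ≠ x ∧ y ≠ f x := by
        intro y hy
        exact ⟨Finset.ne_of_mem_erase (Finset.mem_of_mem_erase hy), Finset.ne_of_mem_erase hy⟩
      have hkpos : 2 ≤ k := by
        have h2 : 0 < (F.erase x).card := Finset.card_pos.2 ⟨f x, h1⟩
        have h3 : (F.erase x).card = F.card - 1 := Finset.card_erase_of_mem hx
        omega
      have hF'card : F'.card = k - 2 := by
        rw [hF', Finset.card_erase_of_mem h1, Finset.card_erase_of_mem hx, hk]; omega
      have hclosed : ∀ y ∈ F', f y ∈ F' := by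
        intro y hy
        have hyF := hmem' y hy
        have hfyF := hmem y hyF
        have h5 := hy_ne y hy
        refine Finset.mem_erase.2 ⟨?_, Finset.mem_erase.2 ⟨?_, hfyF⟩⟩
        · intro h
          exact h5.1 (by rw [← hinv y hyF, h, hinv x hx])
        · intro h
          exact h5.2 (by rw [← hinv y hyF, h])
      have hinv' : ∀ y ∈ F', f (f y) = y := fun y hy => hinv y (hmem' y hy)
      have hne' : ∀ y ∈ F', f y ≠ y := fun y hy => hne y (hmem' y hy)
      have := IH (k - 2) (by omega) hclosed hinv' hne' hF'card
      rcases this with ⟨m, hm⟩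
      exact ⟨m + 1, by omega⟩


/-! ### Generic graph lemmas -/

noncomputable instance ccFintype {V : Type*} [Fintype V] (G : SimpleGraph V) :
    Fintype G.ConnectedComponent :=
  Fintype.ofSurjective G.connectedComponentMk (fun c => c.exists_rep)

section GraphAux

open SimpleGraph

variable {V : Type*} {G : SimpleGraph V}

lemma walk_closed {A : Set V} (hA : ∀ v ∈ A, ∀ w, G.Adj v w → w ∈ A) {x y : V}
    (w : G.Walk x y) (hx : x ∈ A) : y ∈ A := by
  induction w with
  | nil => exact hx
  | cons h p IH => exact IH (hA _ hx _ h)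

lemma reachable_closed {A : Set V} (hA : ∀ v ∈ A, ∀ w, G.Adj v w → w ∈ A) {x y : V}
    (h : G.Reachable x y) (hx : x ∈ A) : y ∈ A := by
  obtain ⟨w⟩ := h; exact walk_closed hA w hx

lemma path_internal {v x y : V} (p : G.Walk x y) :
    p.IsPath → v ∈ p.support → v ≠ x → v ≠ y →
      ∃ u₁ u₂, u₁ ≠ u₂ ∧ G.Adj v u₁ ∧ G.Adj v u₂ ∧ u₁ ∈ p.support ∧ u₂ ∈ p.support := by
  induction p with
  | nil =>
    intro _ hv hvx _
    rw [SimpleGraph.Walk.support_nil, List.mem_singleton] at hv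
    exact absurd hv hvx
  | @cons a c d h q IH =>
    intro hp hv hvx hvy
    rw [SimpleGraph.Walk.support_cons, List.mem_cons] at hv
    rcases hv with rfl | hv
    · exact absurd rfl hvx
    rcases eq_or_ne v c with rfl | hvc
    · -- v is the second vertex; previous is a, next is the second vertex of q
      have hvd : v ≠ d := hvy
      cases q with
      | nil => exact absurd rfl hvd
      | @cons c e d h' q' =>
        refine ⟨a, e, ?_, h.symm, h', ?_, ?_⟩
        · intro hae
          have : a ∈ (SimpleGraph.Walk.cons h' q').support := by
            rw [hae]
            rw [SimpleGraph.Walk.support_cons]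
            exact List.mem_cons_of_mem _ q'.start_mem_support
          exact ((SimpleGraph.Walk.cons_isPath_iff _ _).1 hp).2 this
        · rw [SimpleGraph.Walk.support_cons]; exact List.mem_cons_self
        · rw [SimpleGraph.Walk.support_cons, SimpleGraph.Walk.support_cons]
          exact List.mem_cons_of_mem _ (List.mem_cons_of_mem _ q'.start_mem_support)
    · have hq : q.IsPath := ((SimpleGraph.Walk.cons_isPath_iff _ _).1 hp).1
      obtain ⟨u₁, u₂, hne, h1, h2, hm1, hm2⟩ := IH hq hv hvc hvy
      refine ⟨u₁, u₂, hne, h1, h2, ?_, ?_⟩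
      · rw [SimpleGraph.Walk.support_cons]; exact List.mem_cons_of_mem _ hm1
      · rw [SimpleGraph.Walk.support_cons]; exact List.mem_cons_of_mem _ hm2

lemma two_of_two {α : Type*} {a b u₁ u₂ w : α} (h1 : u₁ = a ∨ u₁ = b) (h2 : u₂ = a ∨ u₂ = b)
    (hne : u₁ ≠ u₂) (hw : w = a ∨ w = b) : w = u₁ ∨ w = u₂ := by
  rcases h1 with rfl | rfl <;> rcases h2 with rfl | rfl <;> tauto

lemma reachable_sup_edge_iff {a b : V} (hab : a ≠ b) {x y : V} :
    (G ⊔ SimpleGraph.edge a b).Reachable x y ↔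
      G.Reachable x y ∨ (G.Reachable x a ∧ G.Reachable b y) ∨
        (G.Reachable x b ∧ G.Reachable a y) := by
  constructor
  · rintro ⟨w⟩
    induction w with
    | nil => exact Or.inl (Reachable.refl _)
    | @cons u c y h p IH =>
      rcases (SimpleGraph.sup_adj _ _ _ _).1 h with hG | hE
      · rcases IH with h1 | ⟨h1, h2⟩ | ⟨h1, h2⟩
        · exact Or.inl (hG.reachable.trans h1)
        · exact Or.inr (Or.inl ⟨hG.reachable.trans h1, h2⟩)
        · exact Or.inr (Or.inr ⟨hG.reachable.trans h1, h2⟩)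
      · rw [SimpleGraph.edge_adj] at hE
        rcases hE.1 with ⟨rfl, rfl⟩ | ⟨rfl, rfl⟩
        · rcases IH with h1 | ⟨h1, h2⟩ | ⟨h1, h2⟩
          · exact Or.inr (Or.inl ⟨Reachable.refl _, h1⟩)
          · exact Or.inl (h1.symm.trans h2)
          · exact Or.inl h2
        · rcases IH with h1 | ⟨h1, h2⟩ | ⟨h1, h2⟩
          · exact Or.inr (Or.inr ⟨Reachable.refl _, h1⟩)
          · exact Or.inl h2
          · exact Or.inl (h1.symm.trans h2)
  · have hle : G ≤ G ⊔ SimpleGraph.edge a b := le_sup_left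
    have hedge : (G ⊔ SimpleGraph.edge a b).Reachable a b := by
      refine SimpleGraph.Adj.reachable ?_
      exact (SimpleGraph.sup_adj _ _ _ _).2 (Or.inr ((SimpleGraph.edge_adj a b a b).2
        ⟨Or.inl ⟨rfl, rfl⟩, hab⟩))
    rintro (h | ⟨h1, h2⟩ | ⟨h1, h2⟩)
    · exact h.mono hle
    · exact ((h1.mono hle).trans hedge).trans (h2.mono hle)
    · exact ((h1.mono hle).trans hedge.symm).trans (h2.mono hle)

variable [Fintype V]

lemma card_cc_sup_edge_reachable {a b : V} (hab : a ≠ b) (hr : G.Reachable a b) :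
    Nat.card (G ⊔ SimpleGraph.edge a b).ConnectedComponent =
      Nat.card G.ConnectedComponent := by
  classical
  symm
  apply Nat.card_eq_of_bijective
    (fun c => c.map (SimpleGraph.Hom.ofLE le_sup_left))
  constructor
  · intro c d h
    obtain ⟨x, rfl⟩ := c.exists_rep
    obtain ⟨y, rfl⟩ := d.exists_rep
    simp only [SimpleGraph.ConnectedComponent.map_mk] at h
    have h' : (G ⊔ SimpleGraph.edge a b).Reachable x y := SimpleGraph.ConnectedComponent.eq.1 h
    rcases (reachable_sup_edge_iff hab).1 h' with h1 | ⟨h1, h2⟩ | ⟨h1, h2⟩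
    · exact SimpleGraph.ConnectedComponent.eq.2 h1
    · exact SimpleGraph.ConnectedComponent.eq.2 ((h1.trans hr).trans h2)
    · exact SimpleGraph.ConnectedComponent.eq.2 ((h1.trans hr.symm).trans h2)
  · intro c'
    obtain ⟨y, rfl⟩ := c'.exists_rep
    exact ⟨G.connectedComponentMk y, rfl⟩

lemma card_cc_sup_edge_not_reachable {a b : V} (hab : a ≠ b) (hnr : ¬ G.Reachable a b) :
    Nat.card (G ⊔ SimpleGraph.edge a b).ConnectedComponent + 1 =
      Nat.card G.ConnectedComponent := by
  classical
  have hba : ¬ G.Reachable b a := fun h => hnr h.symm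
  set G' := G ⊔ SimpleGraph.edge a b with hG'
  have hle : G ≤ G' := le_sup_left
  have hedge : G'.Reachable a b := by
    refine SimpleGraph.Adj.reachable ?_
    exact (SimpleGraph.sup_adj _ _ _ _).2 (Or.inr ((SimpleGraph.edge_adj a b a b).2
      ⟨Or.inl ⟨rfl, rfl⟩, hab⟩))
  set φ : G.ConnectedComponent → G'.ConnectedComponent :=
    (fun c => c.map (SimpleGraph.Hom.ofLE hle)) with hφ
  have hφmk : ∀ x, φ (G.connectedComponentMk x) = G'.connectedComponentMk x := by
    intro x
    rfl
  have hfib : ∀ c' : G'.ConnectedComponent,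
      (Finset.univ.filter (fun c => φ c = c')).card =
        if c' = G'.connectedComponentMk a then 2 else 1 := by
    intro c'
    obtain ⟨z, rfl⟩ := c'.exists_rep
    show (Finset.univ.filter (fun c => φ c = G'.connectedComponentMk z)).card =
      if G'.connectedComponentMk z = G'.connectedComponentMk a then 2 else 1
    by_cases hza : G'.Reachable z a
    · rw [if_pos (SimpleGraph.ConnectedComponent.eq.2 hza)]
      have hza'' : G.Reachable z a ∨ G.Reachable z b := by
        rcases (reachable_sup_edge_iff hab).1 hza with g1 | ⟨g1, g2⟩ | ⟨g1, g2⟩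
        · exact Or.inl g1
        · exact Or.inl g1
        · exact Or.inr g1
      have hx_iff : ∀ x, G'.Reachable x z ↔ (G.Reachable x a ∨ G.Reachable x b) := by
        intro x
        rw [reachable_sup_edge_iff hab]
        constructor
        · rintro (h1 | ⟨h1, h2⟩ | ⟨h1, h2⟩)
          · rcases hza'' with g | g
            · exact Or.inl (h1.trans g)
            · exact Or.inr (h1.trans g)
          · exact Or.inl h1
          · exact Or.inr h1
        · rintro (h | h)
          · rcases hza'' with g | g
            · exact Or.inl (h.trans g.symm)
            · exact Or.inr (Or.inl ⟨h, g.symm⟩)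
          · rcases hza'' with g | g
            · exact Or.inr (Or.inr ⟨h, g.symm⟩)
            · exact Or.inl (h.trans g.symm)
      have hset : Finset.univ.filter (fun c => φ c = G'.connectedComponentMk z) =
          {G.connectedComponentMk a, G.connectedComponentMk b} := by
        ext c
        obtain ⟨x, rfl⟩ := c.exists_rep
        change G.connectedComponentMk x ∈ _ ↔ G.connectedComponentMk x ∈ _
        simp only [Finset.mem_filter, Finset.mem_univ, true_and,
          Finset.mem_insert, Finset.mem_singleton]
        show φ (G.connectedComponentMk x) = G'.connectedComponentMk z ↔
          G.connectedComponentMk x = G.connectedComponentMk a ∨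
            G.connectedComponentMk x = G.connectedComponentMk b
        rw [hφmk, SimpleGraph.ConnectedComponent.eq, SimpleGraph.ConnectedComponent.eq,
          SimpleGraph.ConnectedComponent.eq]
        exact hx_iff x
      rw [hset]
      exact Finset.card_pair (fun h => hnr (SimpleGraph.ConnectedComponent.eq.1 h))
    · rw [if_neg (fun h => hza (SimpleGraph.ConnectedComponent.eq.1 h))]
      have hx_iff : ∀ x, G'.Reachable x z ↔ G.Reachable x z := by
        intro x
        rw [reachable_sup_edge_iff hab]
        constructor
        · rintro (h1 | ⟨h1, h2⟩ | ⟨h1, h2⟩)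
          · exact h1
          · exact absurd (((h2.symm).mono hle).trans (hedge.symm.trans hedge)) (by
              intro _
              exact hza (((h2.symm).mono hle).trans hedge.symm))
          · exact absurd ((h2.symm).mono hle) (fun hc => hza hc)
        · exact fun h => Or.inl h
      have hset : Finset.univ.filter (fun c => φ c = G'.connectedComponentMk z) =
          {G.connectedComponentMk z} := by
        ext c
        obtain ⟨x, rfl⟩ := c.exists_rep
        change G.connectedComponentMk x ∈ _ ↔ G.connectedComponentMk x ∈ _
        simp only [Finset.mem_filter, Finset.mem_univ, true_and, Finset.mem_singleton]
        show φ (G.connectedComponentMk x) = G'.connectedComponentMk z ↔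
          G.connectedComponentMk x = G.connectedComponentMk z
        rw [hφmk, SimpleGraph.ConnectedComponent.eq, SimpleGraph.ConnectedComponent.eq]
        exact hx_iff x
      rw [hset, Finset.card_singleton]
  rw [Nat.card_eq_fintype_card, Nat.card_eq_fintype_card]
  have h1 : (Finset.univ : Finset G.ConnectedComponent).card =
      ∑ c' : G'.ConnectedComponent, (Finset.univ.filter (fun c => φ c = c')).card :=
    Finset.card_eq_sum_card_fiberwise (fun c _ => Finset.mem_univ _)
  have h2 : ∑ c' : G'.ConnectedComponent, (Finset.univ.filter (fun c => φ c = c')).card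
      = ∑ c' : G'.ConnectedComponent,
          ((1:ℕ) + if c' = G'.connectedComponentMk a then 1 else 0) := by
    refine Finset.sum_congr rfl (fun c' _ => ?_)
    rw [hfib c']
    split_ifs <;> rfl
  have h3 : ∑ c' : G'.ConnectedComponent,
      ((1:ℕ) + if c' = G'.connectedComponentMk a then 1 else 0)
      = Fintype.card G'.ConnectedComponent + 1 := by
    rw [Finset.sum_add_distrib, Finset.sum_const, smul_eq_mul, mul_one,
      Finset.sum_ite_eq' Finset.univ (G'.connectedComponentMk a) (fun _ => (1:ℕ)),
      if_pos (Finset.mem_univ _), Finset.card_univ]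
  have h4 := h1.trans (h2.trans h3)
  have h5 : (Finset.univ : Finset G.ConnectedComponent).card = Fintype.card G.ConnectedComponent :=
    Finset.card_univ
  omega

lemma even_card_adjPairs {V : Type*} [Fintype V] [DecidableEq V] (G : SimpleGraph V)
    (C : Finset V) (hC : ∀ v ∈ C, ∀ w, G.Adj v w → w ∈ C) :
    Even (((C ×ˢ (Finset.univ : Finset V)).filter (fun p => G.Adj p.1 p.2)).card) := by
  classical
  apply even_card_invol (fun p => (p.2, p.1))
  · rintro ⟨x, y⟩ hp
    simp only [Finset.mem_filter, Finset.mem_product, Finset.mem_univ, and_true,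
      true_and] at hp ⊢
    exact ⟨hC _ hp.1 _ hp.2, hp.2.symm⟩
  · rintro ⟨x, y⟩ _; rfl
  · rintro ⟨x, y⟩ hp h
    simp only [Finset.mem_filter] at hp
    have hyx : y = x := congrArg Prod.fst h
    exact G.loopless.irrefl x (hyx ▸ hp.2)

lemma card_adjPairs_eq_sum {V : Type*} [Fintype V] [DecidableEq V] (G : SimpleGraph V)
    (C : Finset V) :
    ((C ×ˢ (Finset.univ : Finset V)).filter (fun p => G.Adj p.1 p.2)).card
      = ∑ v ∈ C, (Finset.univ.filter (G.Adj v)).card := by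
  classical
  rw [Finset.card_eq_sum_card_fiberwise
    (f := Prod.fst) (t := C) (fun p hp => (Finset.mem_product.1 (Finset.mem_filter.1 hp).1).1)]
  refine Finset.sum_congr rfl (fun v hv => ?_)
  apply Finset.card_bij (fun p _ => p.2)
  · rintro ⟨x, y⟩ hp
    simp only [Finset.mem_filter, Finset.mem_product, Finset.mem_univ, and_true,
      true_and] at hp ⊢
    obtain ⟨⟨hxC, hadj⟩, hfst⟩ := hp
    have : x = v := hfst
    rw [← this]
    exact hadj
  · rintro ⟨x1, y1⟩ h1 ⟨x2, y2⟩ h2 h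
    simp only [Finset.mem_filter] at h1 h2
    have e1 : x1 = v := h1.2
    have e2 : x2 = v := h2.2
    have e3 : y1 = y2 := h
    rw [Prod.mk.injEq]
    exact ⟨e1.trans e2.symm, e3⟩
  · intro w hw
    simp only [Finset.mem_filter, Finset.mem_univ, true_and] at hw
    refine ⟨(v, w), ?_, rfl⟩
    simp only [Finset.mem_filter, Finset.mem_product, Finset.mem_univ, and_true, true_and]
    exact ⟨hv, hw⟩

end GraphAux


/-! ### Chords and partners in a split -/

section SplitBasics

variable {n : ℕ} {S : Finset (Finset (ZMod (2 * n)))}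

lemma pair_eq_of_mem {α : Type*} [DecidableEq α] {e : Finset α} {x y : α}
    (hcard : e.card = 2) (hx : x ∈ e) (hy : y ∈ e) (hxy : x ≠ y) : e = {x, y} := by
  have hsub : ({x, y} : Finset α) ⊆ e := by
    intro z hz
    rcases Finset.mem_insert.1 hz with rfl | hz
    · exact hx
    · rw [Finset.mem_singleton] at hz; exact hz ▸ hy
  have hc2 : ({x, y} : Finset α).card = 2 := Finset.card_pair hxy
  exact (Finset.eq_of_subset_of_card_le hsub (by omega)).symm

/-- The chord of `S` containing `x`. -/
noncomputable def chordOf (hS : IsSplit n S) (x : ZMod (2 * n)) : Finset (ZMod (2 * n)) :=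
  (hS.partitions x).exists.choose

lemma chordOf_mem (hS : IsSplit n S) (x : ZMod (2 * n)) : chordOf hS x ∈ S :=
  (hS.partitions x).exists.choose_spec.1

lemma mem_chordOf (hS : IsSplit n S) (x : ZMod (2 * n)) : x ∈ chordOf hS x :=
  (hS.partitions x).exists.choose_spec.2

lemma chordOf_eq_of_mem (hS : IsSplit n S) {e : Finset (ZMod (2 * n))} {x : ZMod (2 * n)}
    (he : e ∈ S) (hx : x ∈ e) : e = chordOf hS x :=
  (hS.partitions x).unique ⟨he, hx⟩ ⟨chordOf_mem hS x, mem_chordOf hS x⟩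

lemma exists_partner (hS : IsSplit n S) (x : ZMod (2 * n)) :
    ∃ y, y ≠ x ∧ chordOf hS x = {x, y} := by
  have hcard := hS.card_two _ (chordOf_mem hS x)
  obtain ⟨a, b, hab, hch⟩ := Finset.card_eq_two.1 hcard
  have hx := mem_chordOf hS x
  rw [hch] at hx
  rcases Finset.mem_insert.1 hx with rfl | hx
  · exact ⟨b, hab.symm, hch⟩
  · rw [Finset.mem_singleton] at hx
    subst hx
    exact ⟨a, hab, by rw [hch, Finset.pair_comm]⟩

/-- The partner of `x` in its chord of `S`. -/
noncomputable def partner (hS : IsSplit n S) (x : ZMod (2 * n)) : ZMod (2 * n) :=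
  (exists_partner hS x).choose

lemma partner_ne (hS : IsSplit n S) (x : ZMod (2 * n)) : partner hS x ≠ x :=
  (exists_partner hS x).choose_spec.1

lemma chordOf_eq_pair (hS : IsSplit n S) (x : ZMod (2 * n)) :
    chordOf hS x = {x, partner hS x} :=
  (exists_partner hS x).choose_spec.2

lemma partner_mem (hS : IsSplit n S) (x : ZMod (2 * n)) : partner hS x ∈ chordOf hS x := by
  rw [chordOf_eq_pair hS x]
  exact Finset.mem_insert.2 (Or.inr (Finset.mem_singleton_self _))

lemma mem_chordOf_iff (hS : IsSplit n S) {x y : ZMod (2 * n)} :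
    y ∈ chordOf hS x ↔ y = x ∨ y = partner hS x := by
  rw [chordOf_eq_pair hS x, Finset.mem_insert, Finset.mem_singleton]

lemma chordOf_partner (hS : IsSplit n S) (x : ZMod (2 * n)) :
    chordOf hS (partner hS x) = chordOf hS x :=
  (chordOf_eq_of_mem hS (chordOf_mem hS x) (partner_mem hS x)).symm

lemma partner_invol (hS : IsSplit n S) (x : ZMod (2 * n)) :
    partner hS (partner hS x) = x := by
  have h1 : x ∈ chordOf hS (partner hS x) := by
    rw [chordOf_partner hS x]; exact mem_chordOf hS x
  rcases (mem_chordOf_iff hS).1 h1 with h | h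
  · exact absurd h.symm (partner_ne hS x)
  · exact h.symm

lemma partner_eq_of_pair (hS : IsSplit n S) {x y : ZMod (2 * n)}
    (h : ({x, y} : Finset (ZMod (2 * n))) ∈ S) (hxy : y ≠ x) : partner hS x = y := by
  have h1 : ({x, y} : Finset (ZMod (2 * n))) = chordOf hS x :=
    chordOf_eq_of_mem hS h (Finset.mem_insert_self _ _)
  have h2 : y ∈ chordOf hS x := by
    rw [← h1]; exact Finset.mem_insert.2 (Or.inr (Finset.mem_singleton_self _))
  rcases (mem_chordOf_iff hS).1 h2 with h3 | h3
  · exact absurd h3 hxy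
  · exact h3.symm

lemma chordOf_pair (hS : IsSplit n S) {x y : ZMod (2 * n)}
    (h : ({x, y} : Finset (ZMod (2 * n))) ∈ S) : chordOf hS x = {x, y} :=
  (chordOf_eq_of_mem hS h (Finset.mem_insert_self _ _)).symm

end SplitBasics


/-! ### The main combinatorial lemma -/

section HGraph

variable {n : ℕ} [NeZero (2*n)]
variable {S S' T A B : Finset (Finset (ZMod (2 * n)))}
variable {P1 P2 P3 P4 : ZMod (2 * n)}

lemma not_sep_of_not_crosses {u v x y : ZMod (2*n)} (huv : u ≠ v) (hxy : x ≠ y)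
    (hux : u ≠ x) (huy : u ≠ y) (hvx : v ≠ x) (hvy : v ≠ y)
    (h : ¬ Crosses n {u, v} {x, y}) : ¬ Sep n u v x y := by
  intro hs
  apply h
  refine ⟨u, v, x, y, rfl, rfl, huv, hxy, ?_, hs⟩
  rw [Finset.disjoint_left]
  intro z hz hz'
  rcases Finset.mem_insert.1 hz with rfl | hz
  · rcases Finset.mem_insert.1 hz' with rfl | hz'
    · exact hux rfl
    · exact huy (Finset.mem_singleton.1 hz')
  · rw [Finset.mem_singleton] at hz
    subst hz
    rcases Finset.mem_insert.1 hz' with rfl | hz'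
    · exact hvx rfl
    · exact hvy (Finset.mem_singleton.1 hz')

lemma walk_snd_support {V : Type*} {G : SimpleGraph V} {x y : V} (w : G.Walk x y)
    (hxy : x ≠ y) : ∃ c, G.Adj x c ∧ c ∈ w.support := by
  cases w with
  | nil => exact absurd rfl hxy
  | cons h p =>
    refine ⟨_, h, ?_⟩
    rw [SimpleGraph.Walk.support_cons]
    exact List.mem_cons_of_mem _ p.start_mem_support

omit [NeZero (2*n)] in
lemma H_adj_cases (hS : IsSplit n S) (hT : IsSplit n T) {x y : ZMod (2*n)}
    (h : (unionGraph n (S ∩ S') T).Adj x y) :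
    y = partner hT x ∨ (chordOf hS x ∈ S' ∧ y = partner hS x) := by
  obtain ⟨hxy, e, he, hx, hy⟩ := h
  rcases he with heA | heT
  · right
    have heS : e ∈ S := (Finset.mem_inter.1 heA).1
    have heS' : e ∈ S' := (Finset.mem_inter.1 heA).2
    have hech : e = chordOf hS x := chordOf_eq_of_mem hS heS hx
    have hch : chordOf hS x ∈ S' := hech ▸ heS'
    have hym : y ∈ chordOf hS x := hech ▸ hy
    rcases (mem_chordOf_iff hS).1 hym with h | h
    · exact absurd h.symm hxy
    · exact ⟨hch, h⟩
  · left
    have hech : e = chordOf hT x := chordOf_eq_of_mem hT heT hx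
    have hym : y ∈ chordOf hT x := hech ▸ hy
    rcases (mem_chordOf_iff hT).1 hym with h | h
    · exact absurd h.symm hxy
    · exact h

omit [NeZero (2*n)] in
lemma T_adj (hT : IsSplit n T) (x : ZMod (2*n)) :
    (unionGraph n (S ∩ S') T).Adj x (partner hT x) :=
  ⟨(partner_ne hT x).symm, chordOf hT x, Or.inr (chordOf_mem hT x),
    mem_chordOf hT x, partner_mem hT x⟩

omit [NeZero (2*n)] in
lemma S_adj (hS : IsSplit n S) {x : ZMod (2*n)} (h : chordOf hS x ∈ S') :
    (unionGraph n (S ∩ S') T).Adj x (partner hS x) :=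
  ⟨(partner_ne hS x).symm, chordOf hS x,
    Or.inl (Finset.mem_inter.2 ⟨chordOf_mem hS x, h⟩),
    mem_chordOf hS x, partner_mem hS x⟩

/-- Context of a split move: `{P1,P2},{P3,P4}` are the chords of `S` that get replaced by
the chords `{P2,P3},{P1,P4}` of `S'`. -/
structure MoveCtx (n : ℕ) (S S' T : Finset (Finset (ZMod (2 * n))))
    (P1 P2 P3 P4 : ZMod (2 * n)) : Prop where
  hS : IsSplit n S
  hS' : IsSplit n S'
  hT : IsSplit n T
  d12 : P1 ≠ P2
  d13 : P1 ≠ P3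
  d14 : P1 ≠ P4
  d23 : P2 ≠ P3
  d24 : P2 ≠ P4
  d34 : P3 ≠ P4
  he1 : ({P1, P2} : Finset (ZMod (2*n))) ∈ S
  he2 : ({P3, P4} : Finset (ZMod (2*n))) ∈ S
  he1' : ({P1, P2} : Finset (ZMod (2*n))) ∉ S'
  he2' : ({P3, P4} : Finset (ZMod (2*n))) ∉ S'
  hf1 : ({P2, P3} : Finset (ZMod (2*n))) ∈ S'
  hf2 : ({P1, P4} : Finset (ZMod (2*n))) ∈ S'
  hrest : ∀ x : ZMod (2 * n), x ≠ P1 → x ≠ P2 → x ≠ P3 → x ≠ P4 → chordOf hS x ∈ S'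

namespace MoveCtx

variable (C : MoveCtx n S S' T P1 P2 P3 P4)

omit [NeZero (2*n)] in
lemma chord1 : chordOf C.hS P1 = {P1, P2} := chordOf_pair C.hS C.he1

omit [NeZero (2*n)] in
lemma chord2 : chordOf C.hS P2 = {P1, P2} :=
  (chordOf_eq_of_mem C.hS C.he1 (Finset.mem_insert.2 (Or.inr (Finset.mem_singleton_self _)))).symm

omit [NeZero (2*n)] in
lemma chord3 : chordOf C.hS P3 = {P3, P4} := chordOf_pair C.hS C.he2

omit [NeZero (2*n)] in
lemma chord4 : chordOf C.hS P4 = {P3, P4} :=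
  (chordOf_eq_of_mem C.hS C.he2 (Finset.mem_insert.2 (Or.inr (Finset.mem_singleton_self _)))).symm

omit [NeZero (2*n)] in
lemma not4 {x : ZMod (2*n)} (h : chordOf C.hS x ∈ S') :
    x ≠ P1 ∧ x ≠ P2 ∧ x ≠ P3 ∧ x ≠ P4 := by
  refine ⟨?_, ?_, ?_, ?_⟩ <;> rintro rfl
  · rw [C.chord1] at h; exact C.he1' h
  · rw [C.chord2] at h; exact C.he1' h
  · rw [C.chord3] at h; exact C.he2' h
  · rw [C.chord4] at h; exact C.he2' h

omit [NeZero (2*n)] in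
lemma adj_of_four {x y : ZMod (2*n)} (hx4 : x = P1 ∨ x = P2 ∨ x = P3 ∨ x = P4)
    (h : (unionGraph n (S ∩ S') T).Adj x y) : y = partner C.hT x := by
  rcases H_adj_cases C.hS C.hT h with h | ⟨hch, _⟩
  · exact h
  · obtain ⟨n1, n2, n3, n4⟩ := C.not4 hch
    rcases hx4 with rfl | rfl | rfl | rfl
    · exact absurd rfl n1
    · exact absurd rfl n2
    · exact absurd rfl n3
    · exact absurd rfl n4

omit [NeZero (2*n)] in
lemma adj_cases' {x y : ZMod (2*n)} (h : (unionGraph n (S ∩ S') T).Adj x y) :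
    y = partner C.hT x ∨ y = partner C.hS x :=
  (H_adj_cases C.hS C.hT h).imp id And.right

include C in
omit [NeZero (2*n)] in
lemma support_closed {x y : ZMod (2*n)} (q : (unionGraph n (S ∩ S') T).Walk x y)
    (hq : q.IsPath) (hx4 : x = P1 ∨ x = P2 ∨ x = P3 ∨ x = P4)
    (hy4 : y = P1 ∨ y = P2 ∨ y = P3 ∨ y = P4) (hxy : x ≠ y) :
    ∀ v ∈ q.support, ∀ w, (unionGraph n (S ∩ S') T).Adj v w → w ∈ q.support := by
  intro v hv w hw
  by_cases hvx : v = x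
  · subst hvx
    obtain ⟨c, hc, hcm⟩ := walk_snd_support q hxy
    have h1 : w = partner C.hT v := C.adj_of_four hx4 hw
    have h2 : c = partner C.hT v := C.adj_of_four hx4 hc
    rw [h1, ← h2]; exact hcm
  · by_cases hvy : v = y
    · subst hvy
      obtain ⟨c, hc, hcm⟩ := walk_snd_support q.reverse hxy.symm
      have hcm' : c ∈ q.support := by
        rw [SimpleGraph.Walk.support_reverse] at hcm
        exact List.mem_reverse.1 hcm
      have h1 : w = partner C.hT v := C.adj_of_four hy4 hw
      have h2 : c = partner C.hT v := C.adj_of_four hy4 hc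
      rw [h1, ← h2]; exact hcm'
    · obtain ⟨u₁, u₂, hne, h1, h2, hm1, hm2⟩ := path_internal q hq hv hvx hvy
      rcases two_of_two (C.adj_cases' h1) (C.adj_cases' h2) hne (C.adj_cases' hw) with
        rfl | rfl
      · exact hm1
      · exact hm2

include C in
omit [NeZero (2*n)] in
lemma notin_support {x y : ZMod (2*n)} (q : (unionGraph n (S ∩ S') T).Walk x y)
    (hq : q.IsPath) {z : ZMod (2*n)} (hz4 : z = P1 ∨ z = P2 ∨ z = P3 ∨ z = P4)
    (hzx : z ≠ x) (hzy : z ≠ y) : z ∉ q.support := by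
  intro hz
  obtain ⟨u₁, u₂, hne, h1, h2, -, -⟩ := path_internal q hq hz hzx hzy
  exact hne ((C.adj_of_four hz4 h1).trans (C.adj_of_four hz4 h2).symm)


include C in
omit [NeZero (2*n)] in
lemma P1_notin (q : (unionGraph n (S ∩ S') T).Walk P2 P4) (hq : q.IsPath) :
    P1 ∉ q.support :=
  C.notin_support q hq (Or.inl rfl) C.d12 C.d14

include C in
omit [NeZero (2*n)] in
lemma P3_notin (q : (unionGraph n (S ∩ S') T).Walk P2 P4) (hq : q.IsPath) :
    P3 ∉ q.support :=
  C.notin_support q hq (Or.inr (Or.inr (Or.inl rfl))) C.d23.symm C.d34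

include C in
omit [NeZero (2*n)] in
lemma q_closed (q : (unionGraph n (S ∩ S') T).Walk P2 P4) (hq : q.IsPath) :
    ∀ v ∈ q.support, ∀ w, (unionGraph n (S ∩ S') T).Adj v w → w ∈ q.support :=
  C.support_closed q hq (Or.inr (Or.inl rfl)) (Or.inr (Or.inr (Or.inr rfl))) C.d24

include C in
omit [NeZero (2*n)] in
lemma Tp_in (q : (unionGraph n (S ∩ S') T).Walk P2 P4) (hq : q.IsPath)
    {z : ZMod (2*n)} (hz : z ∈ q.support) : partner C.hT z ∈ q.support :=
  C.q_closed q hq z hz _ (T_adj C.hT z)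

include C in
omit [NeZero (2*n)] in
lemma Scl (q : (unionGraph n (S ∩ S') T).Walk P2 P4) (hq : q.IsPath)
    {z : ZMod (2*n)} (hz : z ∈ q.support) (h2 : z ≠ P2) (h4 : z ≠ P4) :
    chordOf C.hS z ∈ S' ∧ partner C.hS z ∈ q.support ∧
      partner C.hS z ≠ P2 ∧ partner C.hS z ≠ P4 := by
  have h1 : z ≠ P1 := by rintro rfl; exact C.P1_notin q hq hz
  have h3 : z ≠ P3 := by rintro rfl; exact C.P3_notin q hq hz
  have hch := C.hrest z h1 h2 h3 h4
  refine ⟨hch, C.q_closed q hq z hz _ (S_adj C.hS hch), ?_, ?_⟩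
  · intro hp
    have hmem : P2 ∈ chordOf C.hS z := by
      have hpm := partner_mem C.hS z; rwa [hp] at hpm
    have hcc : chordOf C.hS z = chordOf C.hS P2 :=
      chordOf_eq_of_mem C.hS (chordOf_mem C.hS z) hmem
    rw [C.chord2] at hcc
    have hz2 : z ∈ ({P1, P2} : Finset (ZMod (2*n))) := by
      rw [← hcc]; exact mem_chordOf C.hS z
    rcases Finset.mem_insert.1 hz2 with rfl | hz2
    · exact h1 rfl
    · exact h2 (Finset.mem_singleton.1 hz2)
  · intro hp
    have hmem : P4 ∈ chordOf C.hS z := by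
      have hpm := partner_mem C.hS z; rwa [hp] at hpm
    have hcc : chordOf C.hS z = chordOf C.hS P4 :=
      chordOf_eq_of_mem C.hS (chordOf_mem C.hS z) hmem
    rw [C.chord4] at hcc
    have hz4 : z ∈ ({P3, P4} : Finset (ZMod (2*n))) := by
      rw [← hcc]; exact mem_chordOf C.hS z
    rcases Finset.mem_insert.1 hz4 with rfl | hz4
    · exact h3 rfl
    · exact h4 (Finset.mem_singleton.1 hz4)

include C in
omit [NeZero (2*n)] in
lemma Qeven (q : (unionGraph n (S ∩ S') T).Walk P2 P4) (hq : q.IsPath) :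
    Even q.support.toFinset.card := by
  classical
  apply even_card_invol (partner C.hT)
  · intro z hz
    exact List.mem_toFinset.2 (C.Tp_in q hq (List.mem_toFinset.1 hz))
  · intro z _; exact partner_invol C.hT z
  · intro z _; exact partner_ne C.hT z

include C in
lemma edge_even (q : (unionGraph n (S ∩ S') T).Walk P2 P4) (hq : q.IsPath)
    {u v : ZMod (2*n)} (hadj : (unionGraph n (S ∩ S') T).Adj u v)
    (hu : u ∉ q.support) (hv : v ∉ q.support) :
    Even ((q.support.toFinset ∩ arcF n u v).card) := by
  classical
  obtain ⟨huv, e, he, hue, hve⟩ := hadj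
  have hQmem : ∀ {z : ZMod (2*n)}, z ∈ q.support.toFinset ↔ z ∈ q.support :=
    fun {z} => List.mem_toFinset
  have huW : ∀ {w : ZMod (2*n)}, w ∈ q.support → u ≠ w := fun {w} hw heq => hu (heq ▸ hw)
  have hvW : ∀ {w : ZMod (2*n)}, w ∈ q.support → v ≠ w := fun {w} hw heq => hv (heq ▸ hw)
  have hcard2 : e.card = 2 := by
    rcases he with h | h
    · exact C.hS.card_two _ (Finset.mem_inter.1 h).1
    · exact C.hT.card_two _ h
  have hepair : e = {u, v} := pair_eq_of_mem hcard2 hue hve huv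
  rcases he with heA | heT
  · -- chord of S ∩ S'
    have heS : e ∈ S := (Finset.mem_inter.1 heA).1
    have heS' : e ∈ S' := (Finset.mem_inter.1 heA).2
    have hu4 := C.not4 (show chordOf C.hS u ∈ S' from (chordOf_eq_of_mem C.hS heS hue) ▸ heS')
    have hv4 := C.not4 (show chordOf C.hS v ∈ S' from (chordOf_eq_of_mem C.hS heS hve) ▸ heS')
    have hsplit := Finset.card_filter_add_card_filter_not
      (s := q.support.toFinset ∩ arcF n u v) (p := fun z => z ≠ P2 ∧ z ≠ P4)
    have hpart1 : Even (((q.support.toFinset ∩ arcF n u v).filter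
        (fun z => z ≠ P2 ∧ z ≠ P4)).card) := by
      apply even_card_invol (partner C.hS)
      · intro z hz
        simp only [Finset.mem_filter, Finset.mem_inter, mem_arcF] at hz ⊢
        obtain ⟨⟨hzQ, hzarc⟩, hz2, hz4⟩ := hz
        have hzsupp := hQmem.1 hzQ
        obtain ⟨hch, hpQ, hp2, hp4⟩ := C.Scl q hq hzsupp hz2 hz4
        have hns : ¬ Sep n u v z (partner C.hS z) := by
          apply not_sep_of_not_crosses huv (partner_ne C.hS z).symm (huW hzsupp)
            (huW hpQ) (hvW hzsupp) (hvW hpQ)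
          have hcr := C.hS.noncrossing _ heS _ (chordOf_mem C.hS z)
          rw [hepair, chordOf_eq_pair C.hS z] at hcr
          exact hcr
        exact ⟨⟨hQmem.2 hpQ, (not_sep_iff.1 hns).1 hzarc⟩, hp2, hp4⟩
      · intro z _; exact partner_invol C.hS z
      · intro z _; exact partner_ne C.hS z
    have hQ2 : P2 ∈ q.support.toFinset := hQmem.2 q.start_mem_support
    have hQ4 : P4 ∈ q.support.toFinset := hQmem.2 q.end_mem_support
    have hiff : StrictBtw n u v P2 ↔ StrictBtw n u v P4 := by
      have i1 : ¬ Sep n u v P2 P3 := by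
        apply not_sep_of_not_crosses huv C.d23 hu4.2.1 hu4.2.2.1 hv4.2.1 hv4.2.2.1
        have hcr := C.hS'.noncrossing _ heS' _ C.hf1
        rw [hepair] at hcr
        exact hcr
      have i2 : ¬ Sep n u v P3 P4 := by
        apply not_sep_of_not_crosses huv C.d34 hu4.2.2.1 hu4.2.2.2 hv4.2.2.1 hv4.2.2.2
        have hcr := C.hS.noncrossing _ heS _ C.he2
        rw [hepair] at hcr
        exact hcr
      exact (not_sep_iff.1 i1).trans (not_sep_iff.1 i2)
    have hpart2 : Even (((q.support.toFinset ∩ arcF n u v).filter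
        (fun z => ¬(z ≠ P2 ∧ z ≠ P4))).card) := by
      by_cases hb : StrictBtw n u v P2
      · have hset : (q.support.toFinset ∩ arcF n u v).filter (fun z => ¬(z ≠ P2 ∧ z ≠ P4))
            = {P2, P4} := by
          ext z
          simp only [Finset.mem_filter, Finset.mem_inter, mem_arcF, Finset.mem_insert,
            Finset.mem_singleton, not_and_or, not_ne_iff]
          constructor
          · rintro ⟨-, h⟩; exact h
          · rintro (rfl | rfl)
            · exact ⟨⟨hQ2, hb⟩, Or.inl rfl⟩
            · exact ⟨⟨hQ4, hiff.1 hb⟩, Or.inr rfl⟩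
        rw [hset, Finset.card_pair C.d24]
        exact ⟨1, rfl⟩
      · have hset : (q.support.toFinset ∩ arcF n u v).filter (fun z => ¬(z ≠ P2 ∧ z ≠ P4))
            = ∅ := by
          rw [Finset.eq_empty_iff_forall_notMem]
          intro z hz
          simp only [Finset.mem_filter, Finset.mem_inter, mem_arcF, not_and_or,
            not_ne_iff] at hz
          obtain ⟨⟨hzQ, hzarc⟩, h | h⟩ := hz
          · subst h; exact hb hzarc
          · subst h; exact hb (hiff.2 hzarc)
        rw [hset]
        simp
    rcases hpart1 with ⟨a, ha⟩
    rcases hpart2 with ⟨b, hb2⟩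
    exact ⟨a + b, by omega⟩
  · -- chord of T
    apply even_card_invol (partner C.hT)
    · intro z hz
      simp only [Finset.mem_inter, mem_arcF] at hz ⊢
      obtain ⟨hzQ, hzarc⟩ := hz
      have hzsupp := hQmem.1 hzQ
      have hpsupp := C.Tp_in q hq hzsupp
      have hns : ¬ Sep n u v z (partner C.hT z) := by
        apply not_sep_of_not_crosses huv (partner_ne C.hT z).symm (huW hzsupp)
          (huW hpsupp) (hvW hzsupp) (hvW hpsupp)
        have hcr := C.hT.noncrossing _ heT _ (chordOf_mem C.hT z)
        rw [hepair, chordOf_eq_pair C.hT z] at hcr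
        exact hcr
      exact ⟨hQmem.2 hpsupp, (not_sep_iff.1 hns).1 hzarc⟩
    · intro z _; exact partner_invol C.hT z
    · intro z _; exact partner_ne C.hT z

include C in
lemma walk_even (q : (unionGraph n (S ∩ S') T).Walk P2 P4) (hq : q.IsPath)
    {u z : ZMod (2*n)} (w : (unionGraph n (S ∩ S') T).Walk u z)
    (hdis : ∀ t ∈ w.support, t ∉ q.support) :
    Even ((q.support.toFinset ∩ arcF n u z).card) := by
  induction w with
  | nil => rw [arcF_self]; simp
  | @cons a c d h pw IH =>
    have ha : a ∉ q.support := hdis a (SimpleGraph.Walk.start_mem_support _)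
    have hc : c ∉ q.support := hdis c (by
      rw [SimpleGraph.Walk.support_cons]
      exact List.mem_cons_of_mem _ pw.start_mem_support)
    have hd : d ∉ q.support := hdis d (by
      rw [SimpleGraph.Walk.support_cons]
      exact List.mem_cons_of_mem _ pw.end_mem_support)
    have h1 := C.edge_even q hq h ha hc
    have h2 := IH (fun t ht => hdis t (by
      rw [SimpleGraph.Walk.support_cons]
      exact List.mem_cons_of_mem _ ht))
    exact arc_step (C.Qeven q hq) (fun hmem => ha (List.mem_toFinset.1 hmem))
      (fun hmem => hc (List.mem_toFinset.1 hmem)) (fun hmem => hd (List.mem_toFinset.1 hmem))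
      h1 h2


include C in
lemma no_cross :
    ¬ ((unionGraph n (S ∩ S') T).Reachable P1 P3 ∧
        (unionGraph n (S ∩ S') T).Reachable P2 P4) := by
  classical
  rintro ⟨h13, h24⟩
  obtain ⟨w13⟩ := h13
  obtain ⟨w24⟩ := h24
  set p : (unionGraph n (S ∩ S') T).Walk P1 P3 := w13.toPath.1 with hpdef
  have hp : p.IsPath := w13.toPath.2
  set q : (unionGraph n (S ∩ S') T).Walk P2 P4 := w24.toPath.1 with hqdef
  have hq : q.IsPath := w24.toPath.2
  have h2p : P2 ∉ p.support :=
    C.notin_support p hp (Or.inr (Or.inl rfl)) C.d12.symm C.d23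
  have h4p : P4 ∉ p.support :=
    C.notin_support p hp (Or.inr (Or.inr (Or.inr rfl))) C.d14.symm C.d34.symm
  have hP1q := C.P1_notin q hq
  have hP3q := C.P3_notin q hq
  -- the two paths are support-disjoint
  have hdis : ∀ t ∈ p.support, t ∉ q.support := by
    intro t ht hqt
    have aux : ∀ (z y : ZMod (2*n)) (w : (unionGraph n (S ∩ S') T).Walk z y),
        (∀ s ∈ w.support, s ∈ q.support) → z ∈ p.support → y ∈ p.support := by
      intro z y w
      induction w with
      | nil => intro _ hz; exact hz
      | @cons a c d h pw IH =>
        intro hsub hzp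
        have haq : a ∈ q.support := hsub a (SimpleGraph.Walk.start_mem_support _)
        have ha1 : a ≠ P1 := fun h' => hP1q (h' ▸ haq)
        have ha3 : a ≠ P3 := fun h' => hP3q (h' ▸ haq)
        obtain ⟨u₁, u₂, hne, hA1, hA2, hm1, hm2⟩ := path_internal p hp hzp ha1 ha3
        have hc_mem : c ∈ p.support := by
          rcases two_of_two (C.adj_cases' hA1) (C.adj_cases' hA2) hne (C.adj_cases' h) with
            rfl | rfl
          · exact hm1
          · exact hm2
        exact IH (fun s hs => hsub s (by
          rw [SimpleGraph.Walk.support_cons]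
          exact List.mem_cons_of_mem _ hs)) hc_mem
    exact h4p (aux t P4 (q.dropUntil t hqt)
      (fun s hs => SimpleGraph.Walk.support_dropUntil_subset q hqt hs) ht)
  -- parity of |Q ∩ arc(P1,P3)|
  have heven := C.walk_even q hq p hdis
  have hQ2 : P2 ∈ q.support.toFinset := List.mem_toFinset.2 q.start_mem_support
  have hQ4 : P4 ∈ q.support.toFinset := List.mem_toFinset.2 q.end_mem_support
  have hsepe : ¬ Sep n P1 P2 P3 P4 :=
    not_sep_of_not_crosses C.d12 C.d34 C.d13 C.d14 C.d23 C.d24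
      (C.hS.noncrossing _ C.he1 _ C.he2)
  have hsepf : ¬ Sep n P2 P3 P4 P1 := by
    apply not_sep_of_not_crosses C.d23 C.d14.symm C.d24 C.d12.symm C.d34 C.d13.symm
    have hcr := C.hS'.noncrossing _ C.hf1 _ C.hf2
    rw [show ({P1, P4} : Finset (ZMod (2*n))) = {P4, P1} from Finset.pair_comm _ _] at hcr
    exact hcr
  have hsep : Sep n P1 P3 P2 P4 :=
    third_sep C.d12 C.d13 C.d14 C.d23 C.d24 C.d34 hsepe hsepf
  have hsplit := Finset.card_filter_add_card_filter_not
    (s := q.support.toFinset ∩ arcF n P1 P3) (p := fun z => z ≠ P2 ∧ z ≠ P4)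
  have hpart1 : Even (((q.support.toFinset ∩ arcF n P1 P3).filter
      (fun z => z ≠ P2 ∧ z ≠ P4)).card) := by
    apply even_card_invol (partner C.hS)
    · intro z hz
      simp only [Finset.mem_filter, Finset.mem_inter, mem_arcF] at hz ⊢
      obtain ⟨⟨hzQ, hzarc⟩, hz2, hz4⟩ := hz
      have hzsupp := List.mem_toFinset.1 hzQ
      obtain ⟨hch, hpQ, hp2, hp4⟩ := C.Scl q hq hzsupp hz2 hz4
      have hz1 : z ≠ P1 := fun h' => hP1q (h' ▸ hzsupp)
      have hz3 : z ≠ P3 := fun h' => hP3q (h' ▸ hzsupp)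
      have hpp1 : partner C.hS z ≠ P1 := fun h' => hP1q (h' ▸ hpQ)
      have hpp3 : partner C.hS z ≠ P3 := fun h' => hP3q (h' ▸ hpQ)
      have hns : ¬ Sep n z (partner C.hS z) P1 P3 := by
        have i1 : ¬ Sep n z (partner C.hS z) P1 P2 := by
          apply not_sep_of_not_crosses (partner_ne C.hS z).symm C.d12 hz1 hz2 hpp1 hp2
          have hcr := C.hS.noncrossing _ (chordOf_mem C.hS z) _ C.he1
          rw [chordOf_eq_pair C.hS z] at hcr
          exact hcr
        have i2 : ¬ Sep n z (partner C.hS z) P2 P3 := by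
          apply not_sep_of_not_crosses (partner_ne C.hS z).symm C.d23 hz2 hz3 hp2 hpp3
          have hcr := C.hS'.noncrossing _ hch _ C.hf1
          rw [chordOf_eq_pair C.hS z] at hcr
          exact hcr
        exact not_sep_iff.2 ((not_sep_iff.1 i1).trans (not_sep_iff.1 i2))
      refine ⟨⟨List.mem_toFinset.2 hpQ, ?_⟩, hp2, hp4⟩
      by_contra hnp
      exact hns (sep_symm C.d13 hz1.symm hpp1.symm hz3.symm hpp3.symm
        (partner_ne C.hS z).symm (Or.inl ⟨hzarc, hnp⟩))
    · intro z _; exact partner_invol C.hS z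
    · intro z _; exact partner_ne C.hS z
  have hpart2 : (((q.support.toFinset ∩ arcF n P1 P3)).filter
      (fun z => ¬(z ≠ P2 ∧ z ≠ P4))).card = 1 := by
    rcases hsep with ⟨hb2, hnb4⟩ | ⟨hb4, hnb2⟩
    · have hset : ((q.support.toFinset ∩ arcF n P1 P3)).filter
          (fun z => ¬(z ≠ P2 ∧ z ≠ P4)) = {P2} := by
        ext z
        simp only [Finset.mem_filter, Finset.mem_inter, mem_arcF, Finset.mem_singleton,
          not_and_or, not_ne_iff]
        constructor
        · rintro ⟨⟨hzQ, hzarc⟩, rfl | rfl⟩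
          · rfl
          · exact absurd hzarc hnb4
        · rintro rfl
          exact ⟨⟨hQ2, hb2⟩, Or.inl rfl⟩
      rw [hset, Finset.card_singleton]
    · have hset : ((q.support.toFinset ∩ arcF n P1 P3)).filter
          (fun z => ¬(z ≠ P2 ∧ z ≠ P4)) = {P4} := by
        ext z
        simp only [Finset.mem_filter, Finset.mem_inter, mem_arcF, Finset.mem_singleton,
          not_and_or, not_ne_iff]
        constructor
        · rintro ⟨⟨hzQ, hzarc⟩, rfl | rfl⟩
          · exact absurd hzarc hnb2
          · rfl
        · rintro rfl
          exact ⟨⟨hQ4, hb4⟩, Or.inr rfl⟩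
      rw [hset, Finset.card_singleton]
  rcases heven with ⟨m, hm⟩
  rcases hpart1 with ⟨k, hk⟩
  omega



include C in
omit [NeZero (2*n)] in
lemma comp_even [NeZero (2*n)] (v0 : ZMod (2*n))
    (hv04 : v0 = P1 ∨ v0 = P2 ∨ v0 = P3 ∨ v0 = P4) :
    Even (((Finset.univ.filter
        (fun v => (unionGraph n (S ∩ S') T).Reachable v0 v)).filter
      (fun v => v = P1 ∨ v = P2 ∨ v = P3 ∨ v = P4)).card) := by
  classical
  set H := unionGraph n (S ∩ S') T with hH
  set Cset := Finset.univ.filter (fun v => H.Reachable v0 v) with hCset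
  have hmemC : ∀ {v}, v ∈ Cset ↔ H.Reachable v0 v := by
    intro v; simp [hCset]
  have hclosed : ∀ v ∈ Cset, ∀ w, H.Adj v w → w ∈ Cset := by
    intro v hv w hw
    exact hmemC.2 ((hmemC.1 hv).trans hw.reachable)
  have heven := even_card_adjPairs H Cset hclosed
  rw [card_adjPairs_eq_sum] at heven
  have hsum := (Finset.sum_filter_add_sum_filter_not Cset
    (fun v => v = P1 ∨ v = P2 ∨ v = P3 ∨ v = P4)
    (fun v => (Finset.univ.filter (H.Adj v)).card)).symm
  have claim1 : ∀ v ∈ Cset.filter (fun v => v = P1 ∨ v = P2 ∨ v = P3 ∨ v = P4),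
      (Finset.univ.filter (H.Adj v)).card = 1 := by
    intro v hv
    have hv4 := (Finset.mem_filter.1 hv).2
    have hset : Finset.univ.filter (H.Adj v) = {partner C.hT v} := by
      ext w
      simp only [Finset.mem_filter, Finset.mem_univ, true_and, Finset.mem_singleton]
      constructor
      · intro hadj; exact C.adj_of_four hv4 hadj
      · rintro rfl; exact T_adj C.hT v
    rw [hset, Finset.card_singleton]
  have claim2 : ∀ v ∈ Cset.filter (fun v => ¬(v = P1 ∨ v = P2 ∨ v = P3 ∨ v = P4)),
      (Finset.univ.filter (H.Adj v)).card = 2 := by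
    intro v hv
    have hvC := (Finset.mem_filter.1 hv).1
    have hv4 := (Finset.mem_filter.1 hv).2
    push_neg at hv4
    obtain ⟨hv1, hv2, hv3, hvv4⟩ := hv4
    have hch : chordOf C.hS v ∈ S' := C.hrest v hv1 hv2 hv3 hvv4
    have hTS : partner C.hT v ≠ partner C.hS v := by
      intro heq
      set t := partner C.hT v with ht
      have htS : t = partner C.hS v := heq
      have hchordt : chordOf C.hS t ∈ S' := by
        rw [htS, chordOf_partner C.hS v]
        exact hch
      have ht4 := C.not4 hchordt
      have hAcl : ∀ z ∈ ({v, t} : Set (ZMod (2*n))), ∀ w, H.Adj z w →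
          w ∈ ({v, t} : Set (ZMod (2*n))) := by
        intro z hz w hw
        rcases hz with rfl | rfl
        · rcases C.adj_cases' hw with rfl | rfl
          · exact Or.inr rfl
          · exact Or.inr htS.symm
        · rcases C.adj_cases' hw with rfl | rfl
          · rw [ht, partner_invol C.hT v]
            exact Or.inl rfl
          · rw [htS, partner_invol C.hS v]
            exact Or.inl rfl
      have hv0mem : v0 ∈ ({v, t} : Set (ZMod (2*n))) :=
        reachable_closed hAcl (hmemC.1 hvC).symm (Or.inl rfl)
      rcases hv0mem with h | h
      · rcases hv04 with rfl | rfl | rfl | rfl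
        · exact hv1 h.symm
        · exact hv2 h.symm
        · exact hv3 h.symm
        · exact hvv4 h.symm
      · obtain ⟨t1, t2, t3, t4⟩ := ht4
        rcases hv04 with rfl | rfl | rfl | rfl
        · exact t1 h.symm
        · exact t2 h.symm
        · exact t3 h.symm
        · exact t4 h.symm
    have hset : Finset.univ.filter (H.Adj v) = {partner C.hT v, partner C.hS v} := by
      ext w
      simp only [Finset.mem_filter, Finset.mem_univ, true_and, Finset.mem_insert,
        Finset.mem_singleton]
      constructor
      · intro hadj; exact C.adj_cases' hadj
      · rintro (rfl | rfl)
        · exact T_adj C.hT v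
        · exact S_adj C.hS hch
    rw [hset, Finset.card_pair hTS]
  rw [hsum, Finset.sum_congr rfl claim1, Finset.sum_congr rfl claim2,
    Finset.sum_const, Finset.sum_const, smul_eq_mul, smul_eq_mul, mul_one] at heven
  rcases heven with ⟨m, hm⟩
  refine ⟨m - (Cset.filter (fun v => ¬(v = P1 ∨ v = P2 ∨ v = P3 ∨ v = P4))).card, ?_⟩
  omega

include C in
omit [NeZero (2*n)] in
lemma atLeast [NeZero (2*n)] (v0 : ZMod (2*n))
    (hv04 : v0 = P1 ∨ v0 = P2 ∨ v0 = P3 ∨ v0 = P4) :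
    ∃ z, (z = P1 ∨ z = P2 ∨ z = P3 ∨ z = P4) ∧ z ≠ v0 ∧
      (unionGraph n (S ∩ S') T).Reachable v0 z := by
  classical
  have he := C.comp_even v0 hv04
  set Cf := ((Finset.univ.filter
      (fun v => (unionGraph n (S ∩ S') T).Reachable v0 v)).filter
    (fun v => v = P1 ∨ v = P2 ∨ v = P3 ∨ v = P4)) with hCf
  have hv0mem : v0 ∈ Cf := by
    simp only [hCf, Finset.mem_filter, Finset.mem_univ, true_and]
    exact ⟨SimpleGraph.Reachable.refl _, hv04⟩
  have hpos : 0 < Cf.card := Finset.card_pos.2 ⟨v0, hv0mem⟩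
  have h2le : 2 ≤ Cf.card := by
    rcases he with ⟨m, hm⟩; omega
  have : 0 < (Cf.erase v0).card := by
    rw [Finset.card_erase_of_mem hv0mem]; omega
  obtain ⟨z, hz⟩ := Finset.card_pos.1 this
  have hzne := Finset.ne_of_mem_erase hz
  have hzCf := Finset.mem_of_mem_erase hz
  simp only [hCf, Finset.mem_filter, Finset.mem_univ, true_and] at hzCf
  exact ⟨z, hzCf.2, hzne, hzCf.1⟩

include C in
lemma pairing :
    ((unionGraph n (S ∩ S') T).Reachable P1 P2 ∧
      (unionGraph n (S ∩ S') T).Reachable P3 P4 ∧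
        ¬ (unionGraph n (S ∩ S') T).Reachable P1 P4) ∨
    ((unionGraph n (S ∩ S') T).Reachable P1 P4 ∧
      (unionGraph n (S ∩ S') T).Reachable P2 P3 ∧
        ¬ (unionGraph n (S ∩ S') T).Reachable P3 P4) := by
  classical
  set H := unionGraph n (S ∩ S') T with hH
  have hK : ¬ (H.Reachable P1 P3 ∧ H.Reachable P2 P4) := C.no_cross
  have hquad : H.Reachable P1 P2 → H.Reachable P1 P3 → H.Reachable P1 P4 → False :=
    fun a b c => hK ⟨b, a.symm.trans c⟩
  have htri123 : H.Reachable P1 P2 → H.Reachable P1 P3 → False := by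
    intro a b
    obtain ⟨z, hz4, hzne, hz⟩ := C.atLeast P4 (Or.inr (Or.inr (Or.inr rfl)))
    rcases hz4 with rfl | rfl | rfl | rfl
    · exact hquad a b hz.symm
    · exact hquad a b (a.trans hz.symm)
    · exact hquad a b (b.trans hz.symm)
    · exact hzne rfl
  have htri124 : H.Reachable P1 P2 → H.Reachable P1 P4 → False := by
    intro a b
    obtain ⟨z, hz4, hzne, hz⟩ := C.atLeast P3 (Or.inr (Or.inr (Or.inl rfl)))
    rcases hz4 with rfl | rfl | rfl | rfl
    · exact hquad a hz.symm b
    · exact hquad a (a.trans hz.symm) b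
    · exact hzne rfl
    · exact hquad a (b.trans hz.symm) b
  have h13 : ¬ H.Reachable P1 P3 := by
    intro b
    obtain ⟨z, hz4, hzne, hz⟩ := C.atLeast P2 (Or.inr (Or.inl rfl))
    rcases hz4 with rfl | rfl | rfl | rfl
    · exact htri123 hz.symm b
    · exact hzne rfl
    · exact htri123 (b.trans hz.symm) b
    · exact hK ⟨b, hz⟩
  have h24 : ¬ H.Reachable P2 P4 := by
    intro b
    obtain ⟨z, hz4, hzne, hz⟩ := C.atLeast P1 (Or.inl rfl)
    rcases hz4 with rfl | rfl | rfl | rfl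
    · exact hzne rfl
    · exact htri124 hz (hz.trans b)
    · exact hK ⟨hz, b⟩
    · exact htri124 (hz.trans b.symm) hz
  by_cases h12 : H.Reachable P1 P2
  · left
    have hn14 : ¬ H.Reachable P1 P4 := fun h => htri124 h12 h
    have h23 : ¬ H.Reachable P2 P3 := fun h => htri123 h12 (h12.trans h)
    have h34 : H.Reachable P3 P4 := by
      obtain ⟨z, hz4, hzne, hz⟩ := C.atLeast P3 (Or.inr (Or.inr (Or.inl rfl)))
      rcases hz4 with rfl | rfl | rfl | rfl
      · exact absurd hz.symm h13
      · exact absurd hz.symm h23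
      · exact absurd rfl hzne
      · exact hz
    exact ⟨h12, h34, hn14⟩
  · right
    have h14 : H.Reachable P1 P4 := by
      obtain ⟨z, hz4, hzne, hz⟩ := C.atLeast P1 (Or.inl rfl)
      rcases hz4 with rfl | rfl | rfl | rfl
      · exact absurd rfl hzne
      · exact absurd hz h12
      · exact absurd hz h13
      · exact hz
    have h23 : H.Reachable P2 P3 := by
      obtain ⟨z, hz4, hzne, hz⟩ := C.atLeast P2 (Or.inr (Or.inl rfl))
      rcases hz4 with rfl | rfl | rfl | rfl
      · exact absurd hz.symm h12
      · exact absurd rfl hzne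
      · exact hz
      · exact absurd hz h24
    have hn34 : ¬ H.Reachable P3 P4 := fun h => h13 (h14.trans h.symm)
    exact ⟨h14, h23, hn34⟩


end MoveCtx

end HGraph


/-! ### Extraction of the split-move structure and assembly -/

section Assembly

variable {n : ℕ}

lemma split_card [NeZero (2*n)] {S : Finset (Finset (ZMod (2 * n)))} (hS : IsSplit n S) :
    S.card = n := by
  classical
  have huniv : (Finset.univ : Finset (ZMod (2*n))) = S.biUnion id := by
    ext x
    simp only [Finset.mem_univ, true_iff, Finset.mem_biUnion, id]
    obtain ⟨e, ⟨he, hx⟩, -⟩ := hS.partitions x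
    exact ⟨e, he, hx⟩
  have hdisj : ∀ e ∈ S, ∀ f ∈ S, e ≠ f → Disjoint (id e) (id f) := by
    intro e he f hf hne
    rw [Finset.disjoint_left]
    intro x hx hx'
    exact hne ((hS.partitions x).unique ⟨he, hx⟩ ⟨hf, hx'⟩)
  have h1 : 2*n = ∑ e ∈ S, e.card := by
    calc 2*n = Fintype.card (ZMod (2*n)) := (ZMod.card _).symm
    _ = (Finset.univ : Finset (ZMod (2*n))).card := Finset.card_univ.symm
    _ = (S.biUnion id).card := by rw [huniv]
    _ = ∑ e ∈ S, (id e).card := Finset.card_biUnion hdisj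
    _ = ∑ e ∈ S, e.card := rfl
  have h2 : ∑ e ∈ S, e.card = 2 * S.card := by
    rw [Finset.sum_congr rfl (fun e he => hS.card_two e he), Finset.sum_const,
      smul_eq_mul, mul_comm]
  omega

lemma chord_disjoint {S : Finset (Finset (ZMod (2 * n)))} (hS : IsSplit n S)
    {e f : Finset (ZMod (2 * n))} (he : e ∈ S) (hf : f ∈ S) (hef : e ≠ f)
    {x : ZMod (2 * n)} (hx : x ∈ e) : x ∉ f :=
  fun hx' => hef ((hS.partitions x).unique ⟨he, hx⟩ ⟨hf, hx'⟩)

lemma unionGraph_insert_pair [NeZero (2*n)] (A T : Finset (Finset (ZMod (2 * n))))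
    {a b : ZMod (2 * n)} (hab : a ≠ b) :
    unionGraph n (insert {a, b} A) T = unionGraph n A T ⊔ SimpleGraph.edge a b := by
  classical
  ext x y
  simp only [unionGraph, SimpleGraph.sup_adj, SimpleGraph.edge_adj]
  constructor
  · rintro ⟨hxy, e, (he | he), hx, hy⟩
    · rcases Finset.mem_insert.1 he with rfl | he
      · right
        refine ⟨?_, hxy⟩
        rcases Finset.mem_insert.1 hx with rfl | hx
        · rcases Finset.mem_insert.1 hy with rfl | hy
          · exact absurd rfl hxy
          · exact Or.inl ⟨rfl, (Finset.mem_singleton.1 hy).symm ▸ rfl⟩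
        · rw [Finset.mem_singleton] at hx
          subst hx
          rcases Finset.mem_insert.1 hy with rfl | hy
          · exact Or.inr ⟨rfl, rfl⟩
          · rw [Finset.mem_singleton] at hy
            subst hy
            exact absurd rfl hxy
      · exact Or.inl ⟨hxy, e, Or.inl he, hx, hy⟩
    · exact Or.inl ⟨hxy, e, Or.inr he, hx, hy⟩
  · rintro (⟨hxy, e, he, hx, hy⟩ | ⟨h, hxy⟩)
    · exact ⟨hxy, e, he.imp (Finset.mem_insert_of_mem) id, hx, hy⟩
    · rcases h with ⟨rfl, rfl⟩ | ⟨rfl, rfl⟩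
      · exact ⟨hxy, {x, y}, Or.inl (Finset.mem_insert_self _ _),
          Finset.mem_insert_self _ _,
          Finset.mem_insert.2 (Or.inr (Finset.mem_singleton_self _))⟩
      · exact ⟨hxy, {y, x}, Or.inl (Finset.mem_insert_self _ _),
          Finset.mem_insert.2 (Or.inr (Finset.mem_singleton_self _)),
          Finset.mem_insert_self _ _⟩

end Assembly


section Extraction

variable {n : ℕ}

lemma sdiff_decomp {S S' : Finset (Finset (ZMod (2 * n)))} {D1 D2 : Finset (ZMod (2 * n))}
    (hsd : S \ S' = {D1, D2}) : S = insert D1 (insert D2 (S ∩ S')) := by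
  classical
  ext e
  simp only [Finset.mem_insert, Finset.mem_inter]
  constructor
  · intro he
    by_cases he' : e ∈ S'
    · exact Or.inr (Or.inr ⟨he, he'⟩)
    · have hmem : e ∈ S \ S' := Finset.mem_sdiff.2 ⟨he, he'⟩
      rw [hsd] at hmem
      rcases Finset.mem_insert.1 hmem with h | h
      · exact Or.inl h
      · exact Or.inr (Or.inl (Finset.mem_singleton.1 h))
  · rintro (h | h | ⟨he, -⟩)
    · have hmem : D1 ∈ S \ S' := by rw [hsd]; exact Finset.mem_insert_self _ _
      rw [h]
      exact (Finset.mem_sdiff.1 hmem).1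
    · have hmem : D2 ∈ S \ S' := by
        rw [hsd]; exact Finset.mem_insert.2 (Or.inr (Finset.mem_singleton_self _))
      rw [h]
      exact (Finset.mem_sdiff.1 hmem).1
    · exact he

lemma exists_moveCtx [NeZero (2*n)] {S S' T : Finset (Finset (ZMod (2 * n)))}
    (hT : IsSplit n T) (hmove : SplitMove n S S') :
    ∃ P1 P2 P3 P4 : ZMod (2*n), MoveCtx n S S' T P1 P2 P3 P4 ∧
      S = insert {P1, P2} (insert {P3, P4} (S ∩ S')) ∧
      S' = insert {P2, P3} (insert {P1, P4} (S ∩ S')) := by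
  classical
  obtain ⟨hS, hS', hSne, hcard⟩ := hmove
  have hScard : S.card = n := split_card hS
  have hS'card : S'.card = n := split_card hS'
  have hnz : 2*n ≠ 0 := NeZero.ne _
  have hn2 : 2 ≤ n := by
    by_contra hlt
    have hn1 : n = 1 := by omega
    subst hn1
    obtain ⟨e, hSe⟩ := Finset.card_eq_one.1 hScard
    obtain ⟨f, hS'f⟩ := Finset.card_eq_one.1 hS'card
    have heU : e = Finset.univ := by
      apply Finset.eq_univ_of_card
      rw [hS.card_two e (by rw [hSe]; exact Finset.mem_singleton_self _), ZMod.card]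
    have hfU : f = Finset.univ := by
      apply Finset.eq_univ_of_card
      rw [hS'.card_two f (by rw [hS'f]; exact Finset.mem_singleton_self _), ZMod.card]
    exact hSne (by rw [hSe, hS'f, heU, hfU])
  have hsd : (S \ S').card = 2 := by
    have h := Finset.card_inter_add_card_sdiff S S'
    omega
  have hsd' : (S' \ S).card = 2 := by
    have h := Finset.card_inter_add_card_sdiff S' S
    rw [Finset.inter_comm] at h
    omega
  obtain ⟨E1, E2, hE12, hEeq⟩ := Finset.card_eq_two.1 hsd
  have hE1 : E1 ∈ S \ S' := by rw [hEeq]; exact Finset.mem_insert_self _ _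
  have hE2 : E2 ∈ S \ S' := by
    rw [hEeq]; exact Finset.mem_insert.2 (Or.inr (Finset.mem_singleton_self _))
  have hE1S : E1 ∈ S := (Finset.mem_sdiff.1 hE1).1
  have hE1S' : E1 ∉ S' := (Finset.mem_sdiff.1 hE1).2
  have hE2S : E2 ∈ S := (Finset.mem_sdiff.1 hE2).1
  have hE2S' : E2 ∉ S' := (Finset.mem_sdiff.1 hE2).2
  obtain ⟨p1, p2, hp12, hE1pair⟩ := Finset.card_eq_two.1 (hS.card_two E1 hE1S)
  obtain ⟨p3, p4, hp34, hE2pair⟩ := Finset.card_eq_two.1 (hS.card_two E2 hE2S)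
  have hp1E1 : p1 ∈ E1 := by rw [hE1pair]; exact Finset.mem_insert_self _ _
  have hp2E1 : p2 ∈ E1 := by
    rw [hE1pair]; exact Finset.mem_insert.2 (Or.inr (Finset.mem_singleton_self _))
  have hp3E2 : p3 ∈ E2 := by rw [hE2pair]; exact Finset.mem_insert_self _ _
  have hp4E2 : p4 ∈ E2 := by
    rw [hE2pair]; exact Finset.mem_insert.2 (Or.inr (Finset.mem_singleton_self _))
  have hd13 : p1 ≠ p3 := fun h => chord_disjoint hS hE1S hE2S hE12 hp1E1 (h ▸ hp3E2)
  have hd14 : p1 ≠ p4 := fun h => chord_disjoint hS hE1S hE2S hE12 hp1E1 (h ▸ hp4E2)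
  have hd23 : p2 ≠ p3 := fun h => chord_disjoint hS hE1S hE2S hE12 hp2E1 (h ▸ hp3E2)
  have hd24 : p2 ≠ p4 := fun h => chord_disjoint hS hE1S hE2S hE12 hp2E1 (h ▸ hp4E2)
  have hrest0 : ∀ x, x ≠ p1 → x ≠ p2 → x ≠ p3 → x ≠ p4 → chordOf hS x ∈ S' := by
    intro x h1 h2 h3 h4
    by_contra hmem
    have hx : chordOf hS x ∈ S \ S' := Finset.mem_sdiff.2 ⟨chordOf_mem hS x, hmem⟩
    rw [hEeq] at hx
    rcases Finset.mem_insert.1 hx with h | h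
    · have hxe := mem_chordOf hS x
      rw [h, hE1pair] at hxe
      rcases Finset.mem_insert.1 hxe with h' | h'
      · exact h1 h'
      · exact h2 (Finset.mem_singleton.1 h')
    · rw [Finset.mem_singleton] at h
      have hxe := mem_chordOf hS x
      rw [h, hE2pair] at hxe
      rcases Finset.mem_insert.1 hxe with h' | h'
      · exact h3 h'
      · exact h4 (Finset.mem_singleton.1 h')
  have hkey : ∀ x, x ∈ E1 ∨ x ∈ E2 → chordOf hS' x ∉ S := by
    intro x hx hmem
    have h1 : chordOf hS' x = chordOf hS x :=
      chordOf_eq_of_mem hS hmem (mem_chordOf hS' x)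
    have h2 : chordOf hS x ∈ S' := by rw [← h1]; exact chordOf_mem hS' x
    rcases hx with hx | hx
    · have hE : E1 = chordOf hS x := chordOf_eq_of_mem hS hE1S hx
      rw [← hE] at h2
      exact hE1S' h2
    · have hE : E2 = chordOf hS x := chordOf_eq_of_mem hS hE2S hx
      rw [← hE] at h2
      exact hE2S' h2
  have hwS : chordOf hS' p2 ∉ S := hkey p2 (Or.inl hp2E1)
  have hw'S : chordOf hS' p1 ∉ S := hkey p1 (Or.inl hp1E1)
  have hw2 : partner hS' p2 ≠ p2 := partner_ne hS' p2
  have hw'1 : partner hS' p1 ≠ p1 := partner_ne hS' p1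
  have hw1 : partner hS' p2 ≠ p1 := by
    intro h
    apply hwS
    rw [chordOf_eq_pair hS' p2, h, Finset.pair_comm, ← hE1pair]
    exact hE1S
  have hw'2 : partner hS' p1 ≠ p2 := by
    intro h
    apply hw'S
    rw [chordOf_eq_pair hS' p1, h, ← hE1pair]
    exact hE1S
  have houtside : ∀ x, x ≠ p1 → x ≠ p2 → x ≠ p3 → x ≠ p4 → chordOf hS' x ∈ S := by
    intro x h1 h2 h3 h4
    have hch : chordOf hS x ∈ S' := hrest0 x h1 h2 h3 h4
    have heq : chordOf hS x = chordOf hS' x :=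
      chordOf_eq_of_mem hS' hch (mem_chordOf hS x)
    rw [← heq]
    exact chordOf_mem hS x
  have hw34 : partner hS' p2 = p3 ∨ partner hS' p2 = p4 := by
    by_contra h
    push_neg at h
    have hch : chordOf hS' (partner hS' p2) ∈ S := by
      apply houtside _ hw1 hw2 h.1 h.2
    rw [chordOf_partner hS' p2] at hch
    exact hwS hch
  have hw'34 : partner hS' p1 = p3 ∨ partner hS' p1 = p4 := by
    by_contra h
    push_neg at h
    have hch : chordOf hS' (partner hS' p1) ∈ S := by
      apply houtside _ hw'1 hw'2 h.1 h.2
    rw [chordOf_partner hS' p1] at hch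
    exact hw'S hch
  have hww' : partner hS' p2 ≠ partner hS' p1 := by
    intro heq
    have h3 : chordOf hS' p1 = chordOf hS' p2 := by
      rw [← chordOf_partner hS' p1, ← heq, chordOf_partner hS' p2]
    have hp1mem : p1 ∈ chordOf hS' p2 := by
      rw [← h3]; exact mem_chordOf hS' p1
    rw [chordOf_eq_pair hS' p2] at hp1mem
    rcases Finset.mem_insert.1 hp1mem with h' | h'
    · exact hp12 h'
    · exact hw1 (Finset.mem_singleton.1 h').symm
  have hE2' : ({partner hS' p2, partner hS' p1} : Finset (ZMod (2*n))) = {p3, p4} := by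
    rcases hw34 with h | h <;> rcases hw'34 with h' | h'
    · exact absurd (h.trans h'.symm) hww'
    · rw [h, h']
    · rw [h, h', Finset.pair_comm]
    · exact absurd (h.trans h'.symm) hww'
  have hd1w : p1 ≠ partner hS' p2 := by
    rcases hw34 with h | h <;> rw [h]
    · exact hd13
    · exact hd14
  have hd2w' : p2 ≠ partner hS' p1 := fun h => hw'2 h.symm
  have hd1w' : p1 ≠ partner hS' p1 := fun h => hw'1 h.symm
  have hd2w : p2 ≠ partner hS' p2 := fun h => hw2 h.symm
  have hdww' : partner hS' p2 ≠ partner hS' p1 := hww'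
  have hf1mem : ({p2, partner hS' p2} : Finset (ZMod (2*n))) ∈ S' := by
    rw [← chordOf_eq_pair hS' p2]; exact chordOf_mem hS' p2
  have hf2mem : ({p1, partner hS' p1} : Finset (ZMod (2*n))) ∈ S' := by
    rw [← chordOf_eq_pair hS' p1]; exact chordOf_mem hS' p1
  have hnot34 : ∀ x, x ≠ partner hS' p2 → x ≠ partner hS' p1 → x ≠ p3 ∧ x ≠ p4 := by
    intro x hxw hxw'
    rcases hw34 with h | h <;> rcases hw'34 with h' | h'
    · exact absurd (h.trans h'.symm) hww'
    · exact ⟨h ▸ hxw, h' ▸ hxw'⟩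
    · exact ⟨h' ▸ hxw', h ▸ hxw⟩
    · exact absurd (h.trans h'.symm) hww'
  have hC : MoveCtx n S S' T p1 p2 (partner hS' p2) (partner hS' p1) := by
    refine ⟨hS, hS', hT, hp12, hd1w, hd1w', hd2w, hd2w', hdww', ?_, ?_, ?_, ?_, hf1mem,
      hf2mem, ?_⟩
    · rw [← hE1pair]; exact hE1S
    · rw [hE2', ← hE2pair]; exact hE2S
    · rw [← hE1pair]; exact hE1S'
    · rw [hE2', ← hE2pair]; exact hE2S'
    · intro x h1 h2 h3 h4
      obtain ⟨hx3, hx4⟩ := hnot34 x h3 h4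
      exact hrest0 x h1 h2 hx3 hx4
  refine ⟨p1, p2, partner hS' p2, partner hS' p1, hC, ?_, ?_⟩
  · have hdec := sdiff_decomp hEeq
    rw [hE1pair, hE2pair] at hdec
    rw [hE2']
    exact hdec
  · have hc1mem : chordOf hS' p2 ∈ S' \ S :=
      Finset.mem_sdiff.2 ⟨chordOf_mem hS' p2, hwS⟩
    have hc2mem : chordOf hS' p1 ∈ S' \ S :=
      Finset.mem_sdiff.2 ⟨chordOf_mem hS' p1, hw'S⟩
    have hc12 : chordOf hS' p2 ≠ chordOf hS' p1 := by
      intro h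
      have hp1mem : p1 ∈ chordOf hS' p2 := by rw [h]; exact mem_chordOf hS' p1
      rw [chordOf_eq_pair hS' p2] at hp1mem
      rcases Finset.mem_insert.1 hp1mem with h' | h'
      · exact hp12 h'
      · exact hw1 (Finset.mem_singleton.1 h').symm
    have hsdeq : S' \ S = {chordOf hS' p2, chordOf hS' p1} :=
      pair_eq_of_mem hsd' hc1mem hc2mem hc12
    have hdec := sdiff_decomp hsdeq
    rw [chordOf_eq_pair hS' p2, chordOf_eq_pair hS' p1, Finset.inter_comm] at hdec
    exact hdec

end Extraction

/-- If a split `S'` is obtained from a split `S` by a single split move, then for every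
split `T` of the same `2n` points, `‖S',T‖` equals `‖S,T‖ + 1` or `‖S,T‖ - 1`. -/
theorem splitMove_circleCount (n : ℕ) (hn : 1 ≤ n)
    (S S' T : Finset (Finset (ZMod (2 * n)))) (hT : IsSplit n T)
    (hmove : SplitMove n S S') :
    circleCount n S' T = circleCount n S T + 1 ∨
      circleCount n S' T + 1 = circleCount n S T := by
  haveI : NeZero (2 * n) := ⟨by omega⟩
  obtain ⟨P1, P2, P3, P4, C, hSdec, hS'dec⟩ := exists_moveCtx hT hmove
  have hG1 : unionGraph n S T =
      (unionGraph n (S ∩ S') T ⊔ SimpleGraph.edge P3 P4) ⊔ SimpleGraph.edge P1 P2 := by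
    conv_lhs => rw [hSdec]
    rw [unionGraph_insert_pair _ _ C.d12, unionGraph_insert_pair _ _ C.d34]
  have hG2 : unionGraph n S' T =
      (unionGraph n (S ∩ S') T ⊔ SimpleGraph.edge P1 P4) ⊔ SimpleGraph.edge P2 P3 := by
    conv_lhs => rw [hS'dec]
    rw [unionGraph_insert_pair _ _ C.d23, unionGraph_insert_pair _ _ C.d14]
  set H := unionGraph n (S ∩ S') T with hH
  have hereach : ∀ (G : SimpleGraph (ZMod (2*n))) (a b : ZMod (2*n)), a ≠ b →
      (G ⊔ SimpleGraph.edge a b).Reachable a b := by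
    intro G a b hab
    exact SimpleGraph.Adj.reachable ((SimpleGraph.sup_adj _ _ _ _).2
      (Or.inr ((SimpleGraph.edge_adj a b a b).2 ⟨Or.inl ⟨rfl, rfl⟩, hab⟩)))
  rcases C.pairing with ⟨h12, h34, hn14⟩ | ⟨h14, h23, hn34⟩
  · right
    have hA : circleCount n S T = Nat.card H.ConnectedComponent := by
      unfold circleCount
      rw [hG1]
      rw [card_cc_sup_edge_reachable C.d12 (h12.mono le_sup_left)]
      exact card_cc_sup_edge_reachable C.d34 h34
    have hr23 : (H ⊔ SimpleGraph.edge P1 P4).Reachable P2 P3 :=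
      ((h12.symm.mono le_sup_left).trans (hereach H P1 P4 C.d14)).trans
        (h34.symm.mono le_sup_left)
    have hB : circleCount n S' T + 1 = Nat.card H.ConnectedComponent := by
      unfold circleCount
      rw [hG2]
      rw [card_cc_sup_edge_reachable C.d23 hr23]
      exact card_cc_sup_edge_not_reachable C.d14 hn14
    omega
  · left
    have hB : circleCount n S' T = Nat.card H.ConnectedComponent := by
      unfold circleCount
      rw [hG2]
      rw [card_cc_sup_edge_reachable C.d23 (h23.mono le_sup_left)]
      exact card_cc_sup_edge_reachable C.d14 h14
    have hr12 : (H ⊔ SimpleGraph.edge P3 P4).Reachable P1 P2 :=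
      ((h14.mono le_sup_left).trans (hereach H P3 P4 C.d34).symm).trans
        (h23.symm.mono le_sup_left)
    have hA : circleCount n S T + 1 = Nat.card H.ConnectedComponent := by
      unfold circleCount
      rw [hG1]
      rw [card_cc_sup_edge_reachable C.d12 hr12]
      exact card_cc_sup_edge_not_reachable C.d34 hn34
    omega

end MultiCrossing
end

section
/- For every n ≥ 2 and any splits S and T of the same 2n points, the split distance satisfies d(S,T) = n − ‖S,T‖. -/
attribute [local instance] Classical.propDecidable

namespace MultiCrossing

set_option linter.unusedSectionVars false

lemma pair_eq_pair_iff {α : Type*} [DecidableEq α] {x y z w : α} :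
    ({x, y} : Finset α) = {z, w} ↔ x = z ∧ y = w ∨ x = w ∧ y = z := by
  rw [← Finset.coe_inj, Finset.coe_insert, Finset.coe_insert, Finset.coe_singleton,
    Finset.coe_singleton, Set.pair_eq_pair_iff]

section Val

variable {n : ℕ} [NeZero (2 * n)]

lemma val_sub'' (u v : ZMod (2 * n)) :
    (u - v).val = if v.val ≤ u.val then u.val - v.val else u.val + 2 * n - v.val := by
  split_ifs with h
  · exact ZMod.val_sub h
  · push_neg at h
    have hv : v ≠ 0 := by
      intro hv; rw [hv, ZMod.val_zero] at h; omega
    have : u - v = u + (-v) := by ring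
    rw [this, ZMod.val_add, ZMod.neg_val, if_neg hv]
    have hu := ZMod.val_lt u
    have hvlt := ZMod.val_lt v
    rw [Nat.mod_eq_of_lt (by omega)]
    omega

lemma sub_val (u p q : ZMod (2 * n)) :
    (p - q).val = if (q - u).val ≤ (p - u).val then (p - u).val - (q - u).val
      else (p - u).val + 2 * n - (q - u).val := by
  rw [← sub_sub_sub_cancel_right p q u, val_sub'']

lemma coord_inj {u p q : ZMod (2 * n)} : (p - u).val = (q - u).val ↔ p = q := by
  constructor
  · intro h
    have := ZMod.val_injective _ h
    exact sub_left_injective this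
  · rintro rfl; rfl

lemma coord_eq_zero {u p : ZMod (2 * n)} : (p - u).val = 0 ↔ p = u := by
  rw [ZMod.val_eq_zero, sub_eq_zero]

lemma coord_lt (u p : ZMod (2 * n)) : (p - u).val < 2 * n := ZMod.val_lt _

/-- flip lemma : for x not an endpoint, being in arc (u→v) is the negation of arc (v→u). -/
lemma strictBtw_flip {u v x : ZMod (2 * n)} (huv : u ≠ v) (hxu : x ≠ u) (hxv : x ≠ v) :
    StrictBtw n v u x ↔ ¬ StrictBtw n u v x := by
  have h1 : (x - v).val = _ := sub_val u x v
  have h2 : (u - v).val = _ := sub_val u u v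
  have e0 : (u - u).val = 0 := by rw [sub_self, ZMod.val_zero]
  have eX0 : (x - u).val ≠ 0 := fun h => hxu (coord_eq_zero.mp h)
  have eB0 : (v - u).val ≠ 0 := fun h => huv (coord_eq_zero.mp h).symm
  have eXB : (x - u).val ≠ (v - u).val := fun h => hxv (coord_inj.mp h)
  have lX := coord_lt u x
  have lB := coord_lt u v
  rw [e0] at h2
  unfold StrictBtw
  rw [h1, h2]
  split_ifs <;> omega

end Val

section Cr
attribute [local instance] Classical.propDecidable
set_option linter.unusedSectionVars false
variable {n : ℕ} [NeZero (2 * n)]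

lemma xor_iff_xor {A A' B B' : Prop} (h1 : A ↔ A') (h2 : B ↔ B') :
    Xor' A B ↔ Xor' A' B' := by unfold Xor' Xor; tauto

lemma xor_comm' {A B : Prop} : Xor' A B ↔ Xor' B A := by unfold Xor' Xor; tauto

lemma xor_not_not' {A B : Prop} : Xor' (¬A) (¬B) ↔ Xor' A B := by unfold Xor' Xor; tauto

lemma disjoint_pairs {u v p q : ZMod (2 * n)}
    (h1 : p ≠ u) (h2 : p ≠ v) (h3 : q ≠ u) (h4 : q ≠ v) :
    Disjoint ({u, v} : Finset (ZMod (2 * n))) {p, q} := by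
  rw [Finset.disjoint_left]
  intro a ha hb
  simp only [Finset.mem_insert, Finset.mem_singleton] at ha hb
  rcases ha with rfl | rfl <;> rcases hb with h | h <;> simp_all

lemma crosses_iff {u v p q : ZMod (2 * n)} (huv : u ≠ v) (hpq : p ≠ q)
    (h1 : p ≠ u) (h2 : p ≠ v) (h3 : q ≠ u) (h4 : q ≠ v) :
    Crosses n {u, v} {p, q} ↔ Xor' (StrictBtw n u v p) (StrictBtw n u v q) := by
  constructor
  · rintro ⟨a, b, c, d, he, hf, hab, hcd, -, hx⟩
    have hflip : Xor' (StrictBtw n v u p) (StrictBtw n v u q)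
        ↔ Xor' (StrictBtw n u v p) (StrictBtw n u v q) := by
      rw [strictBtw_flip huv h1 h2, strictBtw_flip huv h3 h4, xor_not_not']
    rcases pair_eq_pair_iff.mp he with ⟨rfl, rfl⟩ | ⟨rfl, rfl⟩ <;>
      rcases pair_eq_pair_iff.mp hf with ⟨rfl, rfl⟩ | ⟨rfl, rfl⟩
    · exact hx
    · exact xor_comm'.mp hx
    · exact hflip.mp hx
    · exact hflip.mp (xor_comm'.mp hx)
  · intro hx
    exact ⟨u, v, p, q, rfl, rfl, huv, hpq, disjoint_pairs h1 h2 h3 h4, hx⟩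

lemma not_crosses_of_same_side {u v p q : ZMod (2 * n)} (huv : u ≠ v) (hpq : p ≠ q)
    (h1 : p ≠ u) (h2 : p ≠ v) (h3 : q ≠ u) (h4 : q ≠ v)
    (hside : StrictBtw n u v p ↔ StrictBtw n u v q) :
    ¬ Crosses n {u, v} {p, q} ∧ ¬ Crosses n {p, q} {u, v} := by
  constructor
  · rw [crosses_iff huv hpq h1 h2 h3 h4]
    unfold Xor' Xor; tauto
  · rw [crosses_iff hpq huv h1.symm h3.symm h2.symm h4.symm]
    have e0 : (u - u).val = 0 := by rw [sub_self, ZMod.val_zero]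
    have hup : (u - p).val = _ := sub_val u u p
    have hqp : (q - p).val = _ := sub_val u q p
    have hvp : (v - p).val = _ := sub_val u v p
    rw [e0] at hup
    have eP0 : (p - u).val ≠ 0 := fun h => h1 (coord_eq_zero.mp h)
    have eQ0 : (q - u).val ≠ 0 := fun h => h3 (coord_eq_zero.mp h)
    have eB0 : (v - u).val ≠ 0 := fun h => huv (coord_eq_zero.mp h).symm
    have ePB : (p - u).val ≠ (v - u).val := fun h => h2 (coord_inj.mp h)
    have eQB : (q - u).val ≠ (v - u).val := fun h => h4 (coord_inj.mp h)
    have ePQ : (p - u).val ≠ (q - u).val := fun h => hpq (coord_inj.mp h)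
    have lP := coord_lt u p
    have lQ := coord_lt u q
    have lB := coord_lt u v
    unfold StrictBtw at hside ⊢
    rw [hup, hqp, hvp]
    unfold Xor' Xor
    split_ifs <;> omega

lemma not_crosses_of_not_disjoint {e f : Finset (ZMod (2 * n))} (h : ¬ Disjoint e f) :
    ¬ Crosses n e f := by
  rintro ⟨a, b, c, d, he, hf, hab, hcd, hd, hx⟩
  exact h hd

end Cr

section Pairing

variable {n : ℕ} [NeZero (2 * n)] {S T : Finset (Finset (ZMod (2 * n)))}

lemma mem_pair' {α : Type*} [DecidableEq α] {a x y : α} :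
    a ∈ ({x, y} : Finset α) ↔ a = x ∨ a = y := by simp

/-- A pairing function realizing a perfect matching `S`. -/
structure IsPairing (n : ℕ) (S : Finset (Finset (ZMod (2 * n))))
    (σ : ZMod (2 * n) → ZMod (2 * n)) : Prop where
  ne : ∀ x, σ x ≠ x
  invol : ∀ x, σ (σ x) = x
  mem : ∀ x, {x, σ x} ∈ S
  eq_of : ∀ e ∈ S, ∀ x ∈ e, e = {x, σ x}

lemma IsSplit.exists_pairing (hS : IsSplit n S) : ∃ σ, IsPairing n S σ := by
  have key : ∀ x : ZMod (2 * n), ∃ y, y ≠ x ∧ {x, y} ∈ S := by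
    intro x
    obtain ⟨e, ⟨heS, hxe⟩, -⟩ := hS.partitions x
    obtain ⟨a, b, hab, rfl⟩ := Finset.card_eq_two.mp (hS.card_two e heS)
    rcases mem_pair'.mp hxe with rfl | rfl
    · exact ⟨b, hab.symm, heS⟩
    · exact ⟨a, hab, by rwa [Finset.pair_comm]⟩
  choose σ hne hmem using key
  have huniq : ∀ e ∈ S, ∀ x ∈ e, e = {x, σ x} := by
    intro e heS x hxe
    obtain ⟨e', -, he'⟩ := hS.partitions x
    rw [he' e ⟨heS, hxe⟩, he' {x, σ x} ⟨hmem x, Finset.mem_insert_self x _⟩]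
  have hinv : ∀ x, σ (σ x) = x := by
    intro x
    have h1 : ({σ x, σ (σ x)} : Finset (ZMod (2 * n))) = {x, σ x} :=
      (huniq _ (hmem x) (σ x) (by simp)).symm
    rcases pair_eq_pair_iff.mp h1 with ⟨h, h'⟩ | ⟨h, h'⟩
    · exact absurd h (hne x)
    · exact h'
  exact ⟨σ, hne, hinv, hmem, huniq⟩

lemma IsPairing.pair_mem_iff {σ : ZMod (2 * n) → ZMod (2 * n)} (hp : IsPairing n S σ)
    {x y : ZMod (2 * n)} (hxy : y ≠ x) : {x, y} ∈ S ↔ σ x = y := by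
  constructor
  · intro h
    have := hp.eq_of _ h x (by simp)
    rcases pair_eq_pair_iff.mp this.symm with ⟨-, h'⟩ | ⟨h', -⟩
    · exact h'
    · exact absurd h'.symm hxy
  · rintro rfl; exact hp.mem x

lemma IsPairing.chord_unique {σ : ZMod (2 * n) → ZMod (2 * n)} (hp : IsPairing n S σ)
    {e f : Finset (ZMod (2 * n))} (he : e ∈ S) (hf : f ∈ S) {x : ZMod (2 * n)}
    (hxe : x ∈ e) (hxf : x ∈ f) : e = f := by
  rw [hp.eq_of e he x hxe, hp.eq_of f hf x hxf]

lemma IsSplit.card_eq (hS : IsSplit n S) : S.card = n := by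
  obtain ⟨σ, hp⟩ := hS.exists_pairing
  have hdisj : ∀ e ∈ S, ∀ f ∈ S, e ≠ f → Disjoint (id e) (id f) := by
    intro e he f hf hef
    rw [Finset.disjoint_left]
    intro x hxe hxf
    exact hef (hp.chord_unique he hf hxe hxf)
  have hcover : S.biUnion id = Finset.univ := by
    ext x
    simp only [Finset.mem_biUnion, Finset.mem_univ, iff_true, id]
    exact ⟨{x, σ x}, hp.mem x, by simp⟩
  have h1 : (S.biUnion id).card = ∑ e ∈ S, e.card := by
    rw [Finset.card_biUnion hdisj]; rfl
  have h2 : ∑ e ∈ S, e.card = 2 * S.card := by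
    rw [Finset.sum_congr rfl (fun e he => hS.card_two e he)]
    simp [mul_comm]
  rw [hcover, Finset.card_univ, ZMod.card] at h1
  omega

lemma unionGraph_adj {σ τ : ZMod (2 * n) → ZMod (2 * n)}
    (hp : IsPairing n S σ) (hq : IsPairing n T τ) (x y : ZMod (2 * n)) :
    (unionGraph n S T).Adj x y ↔ x ≠ y ∧ (σ x = y ∨ τ x = y) := by
  constructor
  · rintro ⟨hxy, e, he, hx, hy⟩
    refine ⟨hxy, ?_⟩
    rcases he with he | he
    · left
      have := hp.eq_of e he x hx
      rw [this] at hy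
      rcases mem_pair'.mp hy with rfl | h
      · exact absurd rfl hxy
      · exact h.symm
    · right
      have := hq.eq_of e he x hx
      rw [this] at hy
      rcases mem_pair'.mp hy with rfl | h
      · exact absurd rfl hxy
      · exact h.symm
  · rintro ⟨hxy, h | h⟩
    · exact ⟨hxy, {x, σ x}, Or.inl (hp.mem x), by simp, by simp [h]⟩
    · exact ⟨hxy, {x, τ x}, Or.inr (hq.mem x), by simp, by simp [h]⟩

end Pairing


section Comp

open SimpleGraph

variable {V : Type*} [Fintype V]

lemma reach_trans {G : SimpleGraph V} {H : SimpleGraph V}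
    (h : ∀ x y, H.Adj x y → G.Reachable x y) :
    ∀ x y, H.Reachable x y → G.Reachable x y := by
  intro x y ⟨w⟩
  induction w with
  | nil => exact Reachable.refl _
  | cons hadj _ ih => exact (h _ _ hadj).trans ih

/-- Map on connected components induced by reachability transfer. -/
noncomputable def compMap (G H : SimpleGraph V) (h : ∀ x y, H.Adj x y → G.Reachable x y) :
    H.ConnectedComponent → G.ConnectedComponent :=
  ConnectedComponent.lift (fun v => G.connectedComponentMk v)
    (fun _ _ p _ => ConnectedComponent.eq.mpr (reach_trans h _ _ p.reachable))

lemma compMap_mk (G H : SimpleGraph V) (h : ∀ x y, H.Adj x y → G.Reachable x y) (x : V) :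
    compMap G H h (H.connectedComponentMk x) = G.connectedComponentMk x := rfl

lemma compMap_surj (G H : SimpleGraph V) (h : ∀ x y, H.Adj x y → G.Reachable x y) :
    Function.Surjective (compMap G H h) := by
  intro C
  refine C.ind (fun x => ⟨H.connectedComponentMk x, rfl⟩)

lemma card_comp_le (G H : SimpleGraph V) (h : ∀ x y, H.Adj x y → G.Reachable x y) :
    Nat.card G.ConnectedComponent ≤ Nat.card H.ConnectedComponent :=
  Nat.card_le_card_of_surjective _ (compMap_surj G H h)

lemma card_comp_eq (G H : SimpleGraph V) (h : ∀ x y, H.Adj x y → G.Reachable x y)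
    (h' : ∀ x y, G.Adj x y → H.Reachable x y) :
    Nat.card G.ConnectedComponent = Nat.card H.ConnectedComponent :=
  le_antisymm (card_comp_le G H h) (card_comp_le H G h')

lemma reach_delete_cases {G : SimpleGraph V} {a b : V} {x y : V}
    (hr : G.Reachable x y) :
    (G.deleteEdges {s(a, b)}).Reachable x y ∨
      (((G.deleteEdges {s(a, b)}).Reachable x a ∨ (G.deleteEdges {s(a, b)}).Reachable x b) ∧
       ((G.deleteEdges {s(a, b)}).Reachable y a ∨ (G.deleteEdges {s(a, b)}).Reachable y b)) := by
  set G' := G.deleteEdges {s(a, b)} with hG'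
  obtain ⟨w⟩ := hr
  induction w with
  | nil => exact Or.inl (Reachable.refl _)
  | @cons x z y hadj p ih =>
    by_cases hez : s(x, z) = s(a, b)
    · rcases Sym2.eq_iff.mp hez with ⟨rfl, rfl⟩ | ⟨rfl, rfl⟩
      · refine Or.inr ⟨Or.inl (Reachable.refl _), ?_⟩
        rcases ih with h | ⟨-, h⟩
        · exact Or.inr h.symm
        · exact h
      · refine Or.inr ⟨Or.inr (Reachable.refl _), ?_⟩
        rcases ih with h | ⟨-, h⟩
        · exact Or.inl h.symm
        · exact h
    · have hadj' : G'.Adj x z := by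
        rw [hG', SimpleGraph.deleteEdges_adj]
        exact ⟨hadj, by simpa using hez⟩
      rcases ih with h | ⟨hx, hy⟩
      · exact Or.inl (hadj'.reachable.trans h)
      · refine Or.inr ⟨?_, hy⟩
        rcases hx with h | h
        · exact Or.inl (hadj'.reachable.trans h)
        · exact Or.inr (hadj'.reachable.trans h)

lemma card_comp_delete_le (G : SimpleGraph V) (a b : V) :
    Nat.card (G.deleteEdges {s(a, b)}).ConnectedComponent ≤
      Nat.card G.ConnectedComponent + 1 := by
  classical
  set G' := G.deleteEdges {s(a, b)} with hG'
  have hmono : ∀ x y, G'.Adj x y → G.Reachable x y := by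
    intro x y h
    exact ((SimpleGraph.deleteEdges_adj).mp h).1.reachable
  set φ := compMap G G' hmono with hφ
  set F : G'.ConnectedComponent → Option G.ConnectedComponent :=
    fun C => if C = G'.connectedComponentMk b then none else some (φ C) with hF
  have hinj : Function.Injective F := by
    intro C D hCD
    rw [hF] at hCD
    by_cases h1 : C = G'.connectedComponentMk b <;>
      by_cases h2 : D = G'.connectedComponentMk b
    · rw [h1, h2]
    · simp only [if_pos h1, if_neg h2] at hCD; exact absurd hCD (by simp)
    · simp only [if_neg h1, if_pos h2] at hCD; exact absurd hCD (by simp)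
    · simp only [if_neg h1, if_neg h2, Option.some.injEq] at hCD
      obtain ⟨x, rfl⟩ := C.exists_rep
      obtain ⟨y, rfl⟩ := D.exists_rep
      have hreach : G.Reachable x y := by
        have := hCD
        rw [hφ] at this
        exact ConnectedComponent.eq.mp this
      rcases reach_delete_cases (a := a) (b := b) hreach with h | ⟨hx, hy⟩
      · exact ConnectedComponent.eq.mpr h
      · rcases hx with hx | hx
        · rcases hy with hy | hy
          · exact ConnectedComponent.eq.mpr (hx.trans hy.symm)
          · exact absurd (ConnectedComponent.eq.mpr hy) h2
        · exact absurd (ConnectedComponent.eq.mpr hx) h1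
  letI : Fintype G.ConnectedComponent := Fintype.ofFinite _
  letI : Fintype G'.ConnectedComponent := Fintype.ofFinite _
  rw [Nat.card_eq_fintype_card, Nat.card_eq_fintype_card]
  have := Fintype.card_le_of_injective F hinj
  rwa [Fintype.card_option] at this

lemma reach_subset_closed {G : SimpleGraph V} {P : Set V}
    (hcl : ∀ u v, u ∈ P → G.Adj u v → v ∈ P) {x y : V} (hx : x ∈ P)
    (hr : G.Reachable x y) : y ∈ P := by
  obtain ⟨w⟩ := hr
  induction w with
  | nil => exact hx
  | cons hadj _ ih => exact ih (hcl _ _ hx hadj)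

end Comp


section UGraph

open SimpleGraph

variable {n : ℕ} [NeZero (2 * n)] {S T A : Finset (Finset (ZMod (2 * n)))}
variable {σ τ : ZMod (2 * n) → ZMod (2 * n)}

lemma IsPairing.inj (hp : IsPairing n S σ) : Function.Injective σ := by
  intro x y h
  have := congrArg σ h
  rwa [hp.invol, hp.invol] at this

lemma adj_of_del_adj {u v : ZMod (2 * n)} (x y : ZMod (2 * n))
    (h : ((unionGraph n A T).deleteEdges {s(u, v)}).Adj x y) :
    (unionGraph n (A.erase {u, v}) T).Adj x y := by
  rw [SimpleGraph.deleteEdges_adj] at h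
  obtain ⟨⟨hxy, e, he, hx, hy⟩, hne⟩ := h
  simp only [Set.mem_singleton_iff] at hne
  rcases he with he | he
  · by_cases heq : e = {u, v}
    · exfalso
      subst heq
      rcases mem_pair'.mp hx with rfl | rfl <;> rcases mem_pair'.mp hy with rfl | rfl
      · exact hxy rfl
      · exact hne rfl
      · exact hne (Sym2.eq_swap)
      · exact hxy rfl
    · exact ⟨hxy, e, Or.inl (Finset.mem_erase.mpr ⟨heq, he⟩), hx, hy⟩
  · exact ⟨hxy, e, Or.inr he, hx, hy⟩

lemma adj_of_erase_adj {e : Finset (ZMod (2 * n))} (x y : ZMod (2 * n))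
    (h : (unionGraph n (A.erase e) T).Adj x y) : (unionGraph n A T).Adj x y := by
  obtain ⟨hxy, f, hf, hx, hy⟩ := h
  rcases hf with hf | hf
  · exact ⟨hxy, f, Or.inl (Finset.mem_of_mem_erase hf), hx, hy⟩
  · exact ⟨hxy, f, Or.inr hf, hx, hy⟩

lemma card_comp_erase_le {u v : ZMod (2 * n)} :
    Nat.card (unionGraph n (A.erase {u, v}) T).ConnectedComponent ≤
      Nat.card (unionGraph n A T).ConnectedComponent + 1 := by
  refine le_trans (card_comp_le _ _ ?_) (card_comp_delete_le (unionGraph n A T) u v)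
  exact fun x y h => (adj_of_del_adj x y h).reachable

lemma erase_graph_eq_delete (hp : IsPairing n S σ) (hq : IsPairing n T τ)
    (a : ZMod (2 * n)) (hστ : τ a ≠ σ a) (x y : ZMod (2 * n)) :
    (unionGraph n (S.erase {a, σ a}) T).Adj x y ↔
      ((unionGraph n S T).deleteEdges {s(a, σ a)}).Adj x y := by
  constructor
  · intro h
    obtain ⟨hxy, f, hf, hx, hy⟩ := h
    rw [SimpleGraph.deleteEdges_adj]
    have hfS : f ∈ S ∨ f ∈ T := by
      rcases hf with hf | hf
      · exact Or.inl (Finset.mem_of_mem_erase hf)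
      · exact Or.inr hf
    refine ⟨⟨hxy, f, hfS, hx, hy⟩, ?_⟩
    simp only [Set.mem_singleton_iff]
    intro hsym
    rcases Sym2.eq_iff.mp hsym with ⟨rfl, rfl⟩ | ⟨rfl, rfl⟩
    · rcases hf with hf | hf
      · have : f = {x, σ x} := hp.eq_of f (Finset.mem_of_mem_erase hf) x hx
        exact (Finset.mem_erase.mp hf).1 this
      · have : f = {x, τ x} := hq.eq_of f hf x hx
        rw [this] at hy
        rcases mem_pair'.mp hy with h' | h'
        · exact hxy h'.symm
        · exact hστ h'.symm
    · -- x = σ a, y = a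
      rcases hf with hf | hf
      · have : f = {y, σ y} := hp.eq_of f (Finset.mem_of_mem_erase hf) y hy
        exact (Finset.mem_erase.mp hf).1 this
      · have : f = {y, τ y} := hq.eq_of f hf y hy
        rw [this] at hx
        rcases mem_pair'.mp hx with h' | h'
        · exact hxy h'
        · exact hστ h'.symm
  · intro h
    rw [SimpleGraph.deleteEdges_adj] at h
    obtain ⟨⟨hxy, f, hf, hx, hy⟩, hne⟩ := h
    simp only [Set.mem_singleton_iff] at hne
    rcases hf with hf | hf
    · by_cases heq : f = {a, σ a}
      · exfalso
        subst heq
        rcases mem_pair'.mp hx with rfl | rfl <;> rcases mem_pair'.mp hy with rfl | rfl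
        · exact hxy rfl
        · exact hne rfl
        · exact hne Sym2.eq_swap
        · exact hxy rfl
      · exact ⟨hxy, f, Or.inl (Finset.mem_erase.mpr ⟨heq, hf⟩), hx, hy⟩
    · exact ⟨hxy, f, Or.inr hf, hx, hy⟩

end UGraph


section Bridge

open SimpleGraph

variable {n : ℕ} [NeZero (2 * n)] {S T : Finset (Finset (ZMod (2 * n)))}
variable {σ τ : ZMod (2 * n) → ZMod (2 * n)}

lemma bridge_free (hp : IsPairing n S σ) (hq : IsPairing n T τ)
    (a : ZMod (2 * n)) (hστ : τ a ≠ σ a) :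
    ((unionGraph n S T).deleteEdges {s(a, σ a)}).Reachable a (σ a) := by
  classical
  set b := σ a with hb
  set G' := (unionGraph n S T).deleteEdges {s(a, b)} with hG'
  by_contra hR
  have hGadj := unionGraph_adj hp hq
  have hG'adj : ∀ x y, G'.Adj x y ↔
      (x ≠ y ∧ (σ x = y ∨ τ x = y)) ∧ ¬(x = a ∧ y = b ∨ x = b ∧ y = a) := by
    intro x y
    rw [hG', SimpleGraph.deleteEdges_adj, hGadj]
    simp [Sym2.eq_iff]
  set Ca : Set (ZMod (2 * n)) := {x | G'.Reachable a x} with hCa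
  have hclosed : ∀ u v, u ∈ Ca → G'.Adj u v → v ∈ Ca :=
    fun u v hu h => hu.trans h.reachable
  have haCa : a ∈ Ca := Reachable.refl a
  have hbCa : b ∉ Ca := hR
  have hba : b ≠ a := hp.ne a
  have hσb : σ b = a := hp.invol a
  -- the auxiliary graph H : G' restricted to Ca
  set H : SimpleGraph (ZMod (2 * n)) :=
    { Adj := fun x y => G'.Adj x y ∧ x ∈ Ca ∧ y ∈ Ca
      symm := by constructor; rintro x y ⟨h, h1, h2⟩; exact ⟨h.symm, h2, h1⟩
      loopless := by constructor; rintro x ⟨h, -⟩; exact G'.loopless.irrefl x h } with hH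
  have hHadj : ∀ x y, H.Adj x y ↔ G'.Adj x y ∧ x ∈ Ca ∧ y ∈ Ca := fun x y => Iff.rfl
  -- neighbor sets
  have hnbra : H.neighborFinset a = {τ a} := by
    ext y
    rw [SimpleGraph.mem_neighborFinset, hHadj, Finset.mem_singleton]
    constructor
    · rintro ⟨hadj, -, -⟩
      rw [hG'adj] at hadj
      obtain ⟨⟨hay, h1 | h1⟩, h2⟩ := hadj
      · exact absurd (Or.inl ⟨rfl, h1.symm⟩) h2
      · exact h1.symm
    · rintro rfl
      have hadj : G'.Adj a (τ a) := by
        rw [hG'adj]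
        refine ⟨⟨fun h => hq.ne a h.symm, Or.inr rfl⟩, ?_⟩
        rintro (⟨-, h⟩ | ⟨h, -⟩)
        · exact hστ h
        · exact hba h.symm
      exact ⟨hadj, haCa, hclosed _ _ haCa hadj⟩
  have hnbr2 : ∀ x ∈ Ca, x ≠ a → H.neighborFinset x = {σ x, τ x} ∧ σ x ≠ τ x := by
    intro x hxCa hxa
    have hxb : x ≠ b := fun h => hbCa (h ▸ hxCa)
    have hστx : σ x ≠ τ x := by
      intro hEq
      have hya : σ x ≠ a := by
        intro h
        have hxb' : x = σ a := by rw [← hp.invol x, h]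
        exact hxb (hxb'.trans hb.symm)
      have hcl : ∀ u v, u ∈ ({x, σ x} : Set (ZMod (2 * n))) → G'.Adj u v →
          v ∈ ({x, σ x} : Set (ZMod (2 * n))) := by
        intro u v hu hadj
        rw [hG'adj] at hadj
        simp only [Set.mem_insert_iff, Set.mem_singleton_iff] at hu ⊢
        rcases hu with rfl | rfl
        · rcases hadj.1.2 with h | h
          · exact Or.inr h.symm
          · exact Or.inr (by rw [← h, ← hEq])
        · rcases hadj.1.2 with h | h
          · exact Or.inl (by rw [← h, hp.invol])
          · exact Or.inl (by rw [← h, hEq, hq.invol])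
      have hax : a ∈ ({x, σ x} : Set (ZMod (2 * n))) :=
        reach_subset_closed hcl (Set.mem_insert x _) (Reachable.symm hxCa)
      simp only [Set.mem_insert_iff, Set.mem_singleton_iff] at hax
      rcases hax with h | h
      · exact hxa h.symm
      · exact hya h.symm
    refine ⟨?_, hστx⟩
    ext y
    rw [SimpleGraph.mem_neighborFinset, hHadj, Finset.mem_insert, Finset.mem_singleton]
    constructor
    · rintro ⟨hadj, -, -⟩
      rw [hG'adj] at hadj
      rcases hadj.1.2 with h | h
      · exact Or.inl h.symm
      · exact Or.inr h.symm
    · intro hy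
      have hadj : G'.Adj x y := by
        rw [hG'adj]
        constructor
        · rcases hy with rfl | rfl
          · exact ⟨fun h => hp.ne x h.symm, Or.inl rfl⟩
          · exact ⟨fun h => hq.ne x h.symm, Or.inr rfl⟩
        · rintro (⟨h, -⟩ | ⟨h, -⟩)
          · exact hxa h
          · exact hxb h
      exact ⟨hadj, hxCa, hclosed _ _ hxCa hadj⟩
  -- degrees
  have hdeg0 : ∀ x, x ∉ Ca → H.degree x = 0 := by
    intro x hx
    rw [← SimpleGraph.card_neighborFinset_eq_degree]
    convert Finset.card_empty
    ext y
    rw [SimpleGraph.mem_neighborFinset, hHadj]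
    simp only [Finset.notMem_empty, iff_false]
    rintro ⟨-, hxCa, -⟩
    exact hx hxCa
  have hdega : H.degree a = 1 := by
    rw [← SimpleGraph.card_neighborFinset_eq_degree, hnbra, Finset.card_singleton]
  have hdeg2 : ∀ x ∈ Ca, x ≠ a → H.degree x = 2 := by
    intro x hx hxa
    obtain ⟨hnb, hne⟩ := hnbr2 x hx hxa
    rw [← SimpleGraph.card_neighborFinset_eq_degree, hnb, Finset.card_pair hne]
  -- handshake contradiction
  have heven : Even (∑ v : ZMod (2 * n), H.degree v) := by
    have h2 : ∑ v : ZMod (2 * n), H.degree v = 2 * H.edgeFinset.card := by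
      convert SimpleGraph.sum_degrees_eq_twice_card_edges H
    rw [h2]
    exact ⟨H.edgeFinset.card, by ring⟩
  set CaF : Finset (ZMod (2 * n)) := Finset.univ.filter (· ∈ Ca) with hCaF
  have hsum1 : ∑ v : ZMod (2 * n), H.degree v = ∑ v ∈ CaF, H.degree v := by
    rw [hCaF]
    refine (Finset.sum_filter_of_ne ?_).symm
    intro x _ hdx
    by_contra hx
    exact hdx (hdeg0 x hx)
  have haCaF : a ∈ CaF := by rw [hCaF]; simp [haCa]
  have hsum2 : ∑ v ∈ CaF, H.degree v = 1 + 2 * (CaF.card - 1) := by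
    rw [← Finset.add_sum_erase _ _ haCaF, hdega]
    congr 1
    rw [Finset.sum_congr rfl (fun x hx => ?_), Finset.sum_const, smul_eq_mul,
      Finset.card_erase_of_mem haCaF, mul_comm]
    obtain ⟨hxa, hxCaF⟩ := Finset.mem_erase.mp hx
    exact hdeg2 x (by rw [hCaF] at hxCaF; simpa using hxCaF) hxa
  rw [hsum1, hsum2] at heven
  have hpos : 1 ≤ CaF.card := Finset.card_pos.mpr ⟨a, haCaF⟩
  obtain ⟨k, hk⟩ := heven
  omega

end Bridge


section MoveLe

open SimpleGraph

variable {n : ℕ} [NeZero (2 * n)] {S S' T : Finset (Finset (ZMod (2 * n)))}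
variable {σ τ : ZMod (2 * n) → ZMod (2 * n)}

lemma card_comp_erase_chord_eq (hp : IsPairing n S σ) (hq : IsPairing n T τ)
    (a : ZMod (2 * n)) :
    Nat.card (unionGraph n (S.erase {a, σ a}) T).ConnectedComponent =
      Nat.card (unionGraph n S T).ConnectedComponent := by
  have h' : ∀ x y, (unionGraph n (S.erase {a, σ a}) T).Adj x y →
      (unionGraph n S T).Reachable x y :=
    fun x y h => (adj_of_erase_adj x y h).reachable
  by_cases hστ : τ a = σ a
  · refine card_comp_eq _ _ ?_ h'
    rintro x y ⟨hxy, f, hf, hx, hy⟩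
    rcases hf with hf | hf
    · by_cases heq : f = {a, σ a}
      · subst heq
        have hT' : ({a, σ a} : Finset (ZMod (2 * n))) ∈ T := by
          rw [← hστ]; exact hq.mem a
        exact Adj.reachable ⟨hxy, {a, σ a}, Or.inr hT', hx, hy⟩
      · exact Adj.reachable ⟨hxy, f, Or.inl (Finset.mem_erase.mpr ⟨heq, hf⟩), hx, hy⟩
    · exact Adj.reachable ⟨hxy, f, Or.inr hf, hx, hy⟩
  · refine card_comp_eq _ _ ?_ h'
    intro x y hadj
    have hdel : ∀ u v, ((unionGraph n S T).deleteEdges {s(a, σ a)}).Adj u v →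
        (unionGraph n (S.erase {a, σ a}) T).Reachable u v :=
      fun u v h => ((erase_graph_eq_delete hp hq a hστ u v).mpr h).reachable
    by_cases hsym : s(x, y) = s(a, σ a)
    · have hreach : (unionGraph n (S.erase {a, σ a}) T).Reachable a (σ a) :=
        reach_trans hdel a (σ a) (bridge_free hp hq a hστ)
      rcases Sym2.eq_iff.mp hsym with ⟨rfl, rfl⟩ | ⟨rfl, rfl⟩
      · exact hreach
      · exact hreach.symm
    · refine hdel x y ?_
      rw [SimpleGraph.deleteEdges_adj]
      exact ⟨hadj, by simpa using hsym⟩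

lemma splitMove_comp_le (hn : 2 ≤ n) (hmv : SplitMove n S S') (hT : IsSplit n T) :
    Nat.card (unionGraph n S' T).ConnectedComponent ≤
      Nat.card (unionGraph n S T).ConnectedComponent + 1 := by
  obtain ⟨hS, hS', hne, hcard⟩ := hmv
  obtain ⟨σ, hp⟩ := hS.exists_pairing
  obtain ⟨τ, hq⟩ := hT.exists_pairing
  have hSn := hS.card_eq
  have hsd : (S \ S').card = 2 := by
    have h1 : S \ S' = S \ (S ∩ S') := by rw [Finset.sdiff_inter_self_left]
    rw [h1, Finset.card_sdiff_of_subset (Finset.inter_subset_left), hSn, hcard]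
    omega
  obtain ⟨e1, e2, h12, hEq⟩ := Finset.card_eq_two.mp hsd
  have he1 : e1 ∈ S ∧ e1 ∉ S' := by
    have : e1 ∈ S \ S' := by rw [hEq]; simp
    exact Finset.mem_sdiff.mp this
  have he2 : e2 ∈ S ∧ e2 ∉ S' := by
    have : e2 ∈ S \ S' := by rw [hEq]; simp
    exact Finset.mem_sdiff.mp this
  have hinter : S ∩ S' = (S.erase e1).erase e2 := by
    ext f
    simp only [Finset.mem_inter, Finset.mem_erase]
    constructor
    · rintro ⟨hfS, hfS'⟩
      exact ⟨fun h => he2.2 (h ▸ hfS'), fun h => he1.2 (h ▸ hfS'), hfS⟩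
    · rintro ⟨hf2, hf1, hfS⟩
      refine ⟨hfS, ?_⟩
      by_contra hfS'
      have : f ∈ S \ S' := Finset.mem_sdiff.mpr ⟨hfS, hfS'⟩
      rw [hEq] at this
      rcases mem_pair'.mp this with h | h
      · exact hf1 h
      · exact hf2 h
  -- chord shapes
  obtain ⟨u2, v2, huv2, he2eq⟩ := Finset.card_eq_two.mp (hS.card_two e2 he2.1)
  obtain ⟨u1, v1, huv1, he1eq⟩ := Finset.card_eq_two.mp (hS.card_two e1 he1.1)
  have he1σ : e1 = {u1, σ u1} := hp.eq_of e1 he1.1 u1 (by rw [he1eq]; simp)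
  -- chain of inequalities
  have step1 : Nat.card (unionGraph n S' T).ConnectedComponent ≤
      Nat.card (unionGraph n (S ∩ S') T).ConnectedComponent := by
    refine card_comp_le _ _ ?_
    rintro x y ⟨hxy, f, hf, hx, hy⟩
    rcases hf with hf | hf
    · exact Adj.reachable ⟨hxy, f, Or.inl (Finset.mem_inter.mp hf).2, hx, hy⟩
    · exact Adj.reachable ⟨hxy, f, Or.inr hf, hx, hy⟩
  have step2 : Nat.card (unionGraph n ((S.erase e1).erase e2) T).ConnectedComponent ≤
      Nat.card (unionGraph n (S.erase e1) T).ConnectedComponent + 1 := by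
    rw [he2eq]
    exact card_comp_erase_le
  have step3 : Nat.card (unionGraph n (S.erase e1) T).ConnectedComponent =
      Nat.card (unionGraph n S T).ConnectedComponent := by
    rw [he1σ]
    exact card_comp_erase_chord_eq hp hq u1
  rw [hinter] at step1
  omega

end MoveLe


section Count

open SimpleGraph

variable {n : ℕ} [NeZero (2 * n)] {S T : Finset (Finset (ZMod (2 * n)))}
variable {σ τ : ZMod (2 * n) → ZMod (2 * n)}

lemma comp_self_eq (hT : IsSplit n T) :
    Nat.card (unionGraph n T T).ConnectedComponent = n := by
  classical
  obtain ⟨τ, hq⟩ := hT.exists_pairing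
  have hadj := unionGraph_adj hq hq
  set f : ZMod (2 * n) → {e // e ∈ T} := fun x => ⟨{x, τ x}, hq.mem x⟩ with hf
  have hconst : ∀ v w, (unionGraph n T T).Adj v w → f v = f w := by
    intro v w h
    rw [hadj] at h
    obtain ⟨hvw, h' | h'⟩ := h <;>
    · subst h'
      rw [hf]
      refine Subtype.ext ?_
      simp only
      rw [hq.invol, Finset.pair_comm]
  have hwalk : ∀ v w, (unionGraph n T T).Walk v w → f v = f w := by
    intro v w p
    induction p with
    | nil => rfl
    | cons h _ ih => exact (hconst _ _ h).trans ih
  set F : (unionGraph n T T).ConnectedComponent → {e // e ∈ T} :=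
    ConnectedComponent.lift f (fun v w p _ => hwalk v w p) with hF
  have hFmk : ∀ x, F ((unionGraph n T T).connectedComponentMk x) = f x := fun _ => rfl
  have hbij : Function.Bijective F := by
    constructor
    · have key : ∀ x y, F ((unionGraph n T T).connectedComponentMk x) =
          F ((unionGraph n T T).connectedComponentMk y) →
          (unionGraph n T T).connectedComponentMk x =
            (unionGraph n T T).connectedComponentMk y := by
        intro x y hCD
        rw [hFmk, hFmk, hf] at hCD
        have hpair : ({x, τ x} : Finset (ZMod (2 * n))) = {y, τ y} :=
          congrArg Subtype.val hCD
        have hy : y ∈ ({x, τ x} : Finset (ZMod (2 * n))) := by rw [hpair]; simp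
        rcases mem_pair'.mp hy with rfl | hy'
        · rfl
        · refine ConnectedComponent.sound (Adj.reachable ?_)
          rw [hadj]
          exact ⟨fun h => hq.ne x (hy'.symm ▸ h.symm), Or.inl hy'.symm⟩
      intro C D
      exact C.ind (fun x => D.ind (fun y => key x y))
    · rintro ⟨e, he⟩
      have hne : e.Nonempty := Finset.card_pos.mp (by rw [hT.card_two e he]; omega)
      obtain ⟨x, hx⟩ := hne
      refine ⟨(unionGraph n T T).connectedComponentMk x, ?_⟩
      rw [hFmk, hf]
      exact Subtype.ext (hq.eq_of e he x hx).symm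
  rw [Nat.card_eq_of_bijective F hbij, Nat.card_eq_fintype_card, Fintype.card_coe,
    hT.card_eq]

lemma comp_pair_fun (hp : IsPairing n S σ) (hq : IsPairing n T τ) :
    ∃ g : (unionGraph n S T).ConnectedComponent × Bool → ZMod (2 * n),
      Function.Injective g ∧
      (∀ C i, (unionGraph n S T).connectedComponentMk (g (C, i)) = C) ∧
      (∀ C, g (C, false) = C.out ∧ g (C, true) = σ C.out) := by
  have hadj := unionGraph_adj hp hq
  have hcomp : ∀ (C : (unionGraph n S T).ConnectedComponent) (i : Bool),
      (unionGraph n S T).connectedComponentMk (if i then σ C.out else C.out) = C := by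
    intro C i
    cases i
    · exact C.out_eq
    · have hadj1 : (unionGraph n S T).Adj C.out (σ C.out) := by
        rw [hadj]
        exact ⟨(hp.ne C.out).symm, Or.inl rfl⟩
      exact Eq.trans (ConnectedComponent.sound hadj1.symm.reachable) C.out_eq
  refine ⟨fun Ci => if Ci.2 then σ Ci.1.out else Ci.1.out, ?_, hcomp, fun C => ⟨rfl, rfl⟩⟩
  rintro ⟨C, i⟩ ⟨D, j⟩ hg
  simp only at hg
  have hCD : C = D := by rw [← hcomp C i, ← hcomp D j, hg]
  subst hCD
  have hij : i = j := by
    by_contra hij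
    cases i <;> cases j <;> simp_all
    · exact hp.ne C.out hg.symm
    · exact hp.ne C.out hg
  rw [hij]

lemma comp_le_n (hp : IsPairing n S σ) (hq : IsPairing n T τ) :
    Nat.card (unionGraph n S T).ConnectedComponent ≤ n := by
  classical
  obtain ⟨g, hginj, -, -⟩ := comp_pair_fun hp hq
  letI : Fintype (unionGraph n S T).ConnectedComponent := Fintype.ofFinite _
  have hcard := Fintype.card_le_of_injective g hginj
  rw [Fintype.card_prod, Fintype.card_bool, ZMod.card] at hcard
  rw [Nat.card_eq_fintype_card]
  omega

lemma eq_of_comp_eq_n (hS : IsSplit n S) (hT : IsSplit n T)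
    (hcomp : Nat.card (unionGraph n S T).ConnectedComponent = n) : S = T := by
  classical
  obtain ⟨σ, hp⟩ := hS.exists_pairing
  obtain ⟨τ, hq⟩ := hT.exists_pairing
  obtain ⟨g, hginj, hgcomp, hgval⟩ := comp_pair_fun hp hq
  letI : Fintype (unionGraph n S T).ConnectedComponent := Fintype.ofFinite _
  have hadj := unionGraph_adj hp hq
  have hgbij : Function.Bijective g := by
    rw [Fintype.bijective_iff_injective_and_card]
    refine ⟨hginj, ?_⟩
    rw [Fintype.card_prod, Fintype.card_bool, ZMod.card, ← Nat.card_eq_fintype_card, hcomp]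
    ring
  have hmem2 : ∀ v : ZMod (2 * n),
      v = ((unionGraph n S T).connectedComponentMk v).out ∨
      v = σ ((unionGraph n S T).connectedComponentMk v).out := by
    intro v
    obtain ⟨⟨D, i⟩, hg⟩ := hgbij.2 v
    have hD : D = (unionGraph n S T).connectedComponentMk v := by rw [← hg, hgcomp]
    subst hD
    cases i
    · exact Or.inl (hg.symm.trans (hgval _).1)
    · exact Or.inr (hg.symm.trans (hgval _).2)
  have hστ : ∀ x, σ x = τ x := by
    intro x
    have hCσ : (unionGraph n S T).connectedComponentMk (σ x) =
        (unionGraph n S T).connectedComponentMk x := by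
      refine ConnectedComponent.sound (Adj.reachable ?_)
      rw [hadj]
      exact ⟨hp.ne x, Or.inl (hp.invol x)⟩
    have hCτ : (unionGraph n S T).connectedComponentMk (τ x) =
        (unionGraph n S T).connectedComponentMk x := by
      refine ConnectedComponent.sound (Adj.reachable ?_)
      have hadj1 : (unionGraph n S T).Adj x (τ x) := by
        rw [hadj]
        exact ⟨(hq.ne x).symm, Or.inr rfl⟩
      exact hadj1.symm
    have h1 := hmem2 x
    have h2 := hmem2 (σ x)
    have h3 := hmem2 (τ x)
    rw [hCσ] at h2
    rw [hCτ] at h3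
    rcases h2 with h2 | h2 <;> rcases h3 with h3 | h3
    · exact h2.trans h3.symm
    · rcases h1 with h1 | h1
      · exact absurd (h2.trans h1.symm) (hp.ne x)
      · exact absurd (h3.trans h1.symm).symm (fun h => hq.ne x h.symm)
    · rcases h1 with h1 | h1
      · exact absurd (h3.trans h1.symm) (hq.ne x)
      · exact absurd (h2.trans h1.symm).symm (fun h => hp.ne x h.symm)
    · exact h2.trans h3.symm
  ext e
  constructor
  · intro he
    have hne : e.Nonempty := Finset.card_pos.mp (by rw [hS.card_two e he]; omega)
    obtain ⟨x, hx⟩ := hne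
    have : e = {x, σ x} := hp.eq_of e he x hx
    rw [this, hστ]
    exact hq.mem x
  · intro he
    have hne : e.Nonempty := Finset.card_pos.mp (by rw [hT.card_two e he]; omega)
    obtain ⟨x, hx⟩ := hne
    have : e = {x, τ x} := hq.eq_of e he x hx
    rw [this, ← hστ]
    exact hp.mem x
end Count


section Construct

open SimpleGraph

variable {n : ℕ} [NeZero (2 * n)] {S T : Finset (Finset (ZMod (2 * n)))}

lemma xor_resolve {A B : Prop} (h : ¬ Xor' A B) (hA : A) : B := by
  unfold Xor' Xor at h; tauto

lemma exists_good_move (hn : 2 ≤ n) (hS : IsSplit n S) (hT : IsSplit n T) (hST : S ≠ T) :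
    ∃ S', SplitMove n S S' ∧
      Nat.card (unionGraph n S T).ConnectedComponent + 1 ≤
        Nat.card (unionGraph n S' T).ConnectedComponent := by
  classical
  obtain ⟨σ, hp⟩ := hS.exists_pairing
  obtain ⟨τ, hq⟩ := hT.exists_pairing
  -- there is a chord of T not in S
  have hTS : ∃ x : ZMod (2 * n), {x, τ x} ∉ S := by
    by_contra hall
    push_neg at hall
    refine hST ?_
    refine (Finset.eq_of_subset_of_card_le ?_ (by rw [hS.card_eq, hT.card_eq])).symm
    intro e he
    have hne : e.Nonempty := Finset.card_pos.mp (by rw [hT.card_two e he]; omega)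
    obtain ⟨x, hx⟩ := hne
    rw [hq.eq_of e he x hx]
    exact hall x
  -- choose a minimal such chord
  set P : Finset (ZMod (2 * n)) := Finset.univ.filter (fun x => {x, τ x} ∉ S) with hP
  have hPne : P.Nonempty := by
    obtain ⟨x, hx⟩ := hTS
    exact ⟨x, by rw [hP]; simp [hx]⟩
  obtain ⟨b, hbP, hbmin⟩ := Finset.exists_min_image P (fun x => (τ x - x).val) hPne
  have htS : {b, τ b} ∉ S := by
    rw [hP] at hbP
    simpa using hbP
  set c := τ b with hc
  have hτc : τ c = b := hq.invol b
  have hcb : c ≠ b := hq.ne b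
  have hL0 : (c - b).val ≠ 0 := fun h => hcb (coord_eq_zero.mp h)
  have hLlt : (c - b).val < 2 * n := coord_lt b c
  -- minimality restated
  have hmin : ∀ x : ZMod (2 * n), {x, τ x} ∉ S → (c - b).val ≤ (τ x - x).val := by
    intro x hx
    have hxP : x ∈ P := by rw [hP]; simp [hx]
    exact hbmin x hxP
  -- closedness of the open arc (b → c) under σ
  have hclosed : ∀ x, StrictBtw n b c x → StrictBtw n b c (σ x) := by
    intro x hx
    by_contra hσx
    obtain ⟨hX0, hXL⟩ := hx
    have hxb : x ≠ b := fun h => by rw [h, sub_self, ZMod.val_zero] at hX0; omega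
    have hxc : x ≠ c := fun h => by rw [h] at hXL; omega
    have hτxb : τ x ≠ b := by
      intro h
      have h2 : x = τ b := by rw [← hq.invol x, h]
      exact hxc (h2.trans hc.symm)
    have hτxc : τ x ≠ c := by
      intro h
      have h2 : x = τ c := by rw [← hq.invol x, h]
      exact hxb (h2.trans hτc)
    have hτx_ne : x ≠ τ x := fun h => hq.ne x h.symm
    -- τ x is inside the arc
    have hcross := hT.noncrossing {b, c} (by rw [hc]; exact hq.mem b) {x, τ x} (hq.mem x)
    rw [crosses_iff hcb.symm hτx_ne hxb hxc hτxb hτxc] at hcross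
    have hτin : StrictBtw n b c (τ x) := xor_resolve hcross ⟨hX0, hXL⟩
    -- the chord {x, τ x} is not in S
    have hxS : {x, τ x} ∉ S := by
      intro hmem
      have := hp.eq_of _ hmem x (by simp)
      rcases pair_eq_pair_iff.mp this.symm with ⟨-, h'⟩ | ⟨h', -⟩
      · exact hσx (by rw [h']; exact hτin)
      · exact hτx_ne h'
    have hτxS : {τ x, τ (τ x)} ∉ S := by
      rw [hq.invol, Finset.pair_comm]
      exact hxS
    have h1 := hmin x hxS
    have h2 := hmin (τ x) (by rwa [hq.invol] at hτxS ⊢)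
    rw [hq.invol] at h2
    obtain ⟨hY0, hYL⟩ := hτin
    have hXY : (x - b).val ≠ (τ x - b).val := fun h => hτx_ne (coord_inj.mp h)
    have e1 : (τ x - x).val = _ := sub_val b (τ x) x
    have e2 : (x - τ x).val = _ := sub_val b x (τ x)
    rw [e1] at h1
    rw [e2] at h2
    split_ifs at h1 h2 <;> omega
  -- the partners of b and c under σ
  set a := σ b with ha
  set d := σ c with hd
  have hσa : σ a = b := hp.invol b
  have hσd : σ d = c := hp.invol c
  have hab : a ≠ b := hp.ne b
  have hdc : d ≠ c := hp.ne c
  have hac : a ≠ c := by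
    intro h
    refine htS ?_
    have := hp.mem b
    rwa [← ha, h] at this
  have hdb : d ≠ b := by
    intro h
    have : c = σ b := by rw [← hσd, h]
    exact hac (by rw [ha, ← this])
  have had : a ≠ d := fun h => hcb (by rw [← hσd, ← h, ha, hp.invol])
  -- a and d are not strictly inside the arc (b → c)
  have hnA : ¬ StrictBtw n b c a := by
    intro h
    obtain ⟨h1, -⟩ := hclosed a h
    rw [hσa, sub_self, ZMod.val_zero] at h1
    omega
  have hnD : ¬ StrictBtw n b c d := by
    intro h
    obtain ⟨-, h2⟩ := hclosed d h
    rw [hσd] at h2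
    omega
  -- coordinates
  have hA0 : (a - b).val ≠ 0 := fun h => hab (coord_eq_zero.mp h)
  have hD0 : (d - b).val ≠ 0 := fun h => hdb (coord_eq_zero.mp h)
  have hAL : (a - b).val ≠ (c - b).val := fun h => hac (coord_inj.mp h)
  have hDL : (d - b).val ≠ (c - b).val := fun h => (hdc (coord_inj.mp h))
  have hADne : (a - b).val ≠ (d - b).val := fun h => had (coord_inj.mp h)
  have hAgt : (c - b).val < (a - b).val := by
    rcases Nat.lt_or_ge (c - b).val (a - b).val with h | h
    · exact h
    · exfalso; exact hnA ⟨by omega, by omega⟩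
  have hDgt : (c - b).val < (d - b).val := by
    rcases Nat.lt_or_ge (c - b).val (d - b).val with h | h
    · exact h
    · exfalso; exact hnD ⟨by omega, by omega⟩
  have hAlt : (a - b).val < 2 * n := coord_lt b a
  have hDlt : (d - b).val < 2 * n := coord_lt b d
  -- the cyclic order is b < c < d < a
  have hbcS : ({b, a} : Finset (ZMod (2 * n))) ∈ S := hp.mem b
  have he1S : ({a, b} : Finset (ZMod (2 * n))) ∈ S := by rwa [Finset.pair_comm]
  have he2S : ({c, d} : Finset (ZMod (2 * n))) ∈ S := hp.mem c
  have hDA : (d - b).val < (a - b).val := by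
    rcases Nat.lt_or_ge (d - b).val (a - b).val with h | h
    · exact h
    · exfalso
      have hlt : (a - b).val < (d - b).val := by omega
      refine hS.noncrossing _ he2S _ he1S ?_
      rw [crosses_iff hdc.symm hab hac had hcb.symm hdb.symm]
      have eac : (a - c).val = _ := sub_val b a c
      have edc : (d - c).val = _ := sub_val b d c
      have ebc : (b - c).val = _ := sub_val b b c
      rw [sub_self, ZMod.val_zero] at ebc
      refine Or.inl ⟨⟨?_, ?_⟩, ?_⟩
      · unfold StrictBtw at *
        rw [eac]
        split_ifs <;> omega
      · unfold StrictBtw at *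
        rw [eac, edc]
        split_ifs <;> omega
      · unfold StrictBtw
        rw [ebc, edc]
        split_ifs <;> omega
  -- abbreviations
  set e1 : Finset (ZMod (2 * n)) := {a, b} with he1
  set e2 : Finset (ZMod (2 * n)) := {c, d} with he2
  set S0 : Finset (Finset (ZMod (2 * n))) := (S.erase e1).erase e2 with hS0
  have hS0mem : ∀ f ∈ S0, f ∈ S ∧ f ≠ e1 ∧ f ≠ e2 := by
    intro f hf
    rw [hS0, Finset.mem_erase, Finset.mem_erase] at hf
    exact ⟨hf.2.2, hf.2.1, hf.1⟩
  have havoid : ∀ f ∈ S0, ∀ x ∈ f, x ≠ a ∧ x ≠ b ∧ x ≠ c ∧ x ≠ d := by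
    intro f hf x hx
    obtain ⟨hfS, hfe1, hfe2⟩ := hS0mem f hf
    have hfx : f = {x, σ x} := hp.eq_of f hfS x hx
    refine ⟨?_, ?_, ?_, ?_⟩ <;> intro h
    · exact hfe1 (by rw [hfx, h, he1]; rw [ha] at hσa; rw [hσa])
    · exact hfe1 (by rw [hfx, h, he1, ← ha, Finset.pair_comm])
    · exact hfe2 (by rw [hfx, h, he2, ← hd])
    · exact hfe2 (by rw [hfx, h, he2]; rw [hd] at hσd; rw [hσd, Finset.pair_comm])
  -- chords of S0 do not enter the arc (d → a)
  have hsideDA : ∀ x, x ≠ a → x ≠ b → x ≠ c → x ≠ d →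
      σ x ≠ a → σ x ≠ b → σ x ≠ c → σ x ≠ d →
      StrictBtw n d a x → StrictBtw n d a (σ x) := by
    intro x hxa hxb hxc hxd hsa hsb hsc hsd hbtw
    have hX0 : (x - b).val ≠ 0 := fun h => hxb (coord_eq_zero.mp h)
    have hXL : (x - b).val ≠ (c - b).val := fun h => hxc (coord_inj.mp h)
    have hXA : (x - b).val ≠ (a - b).val := fun h => hxa (coord_inj.mp h)
    have hXD : (x - b).val ≠ (d - b).val := fun h => hxd (coord_inj.mp h)
    have hXlt : (x - b).val < 2 * n := coord_lt b x
    have hQ0 : (σ x - b).val ≠ 0 := fun h => hsb (coord_eq_zero.mp h)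
    have hQL : (σ x - b).val ≠ (c - b).val := fun h => hsc (coord_inj.mp h)
    have hQA : (σ x - b).val ≠ (a - b).val := fun h => hsa (coord_inj.mp h)
    have hQD : (σ x - b).val ≠ (d - b).val := fun h => hsd (coord_inj.mp h)
    have hQlt : (σ x - b).val < 2 * n := coord_lt b (σ x)
    have ead : (a - d).val = _ := sub_val b a d
    obtain ⟨h1, h2⟩ := hbtw
    have eXd : (x - d).val = _ := sub_val b x d
    rw [eXd] at h1 h2
    rw [ead] at h2
    have hDX : (d - b).val < (x - b).val ∧ (x - b).val < (a - b).val := by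
      split_ifs at h1 h2 <;> omega
    by_contra hno
    unfold StrictBtw at hno
    have eQd : (σ x - d).val = _ := sub_val b (σ x) d
    rw [eQd, ead] at hno
    have hQrange : (0 < (σ x - b).val ∧ (σ x - b).val < (c - b).val) ∨
        ((c - b).val < (σ x - b).val ∧ (σ x - b).val < (d - b).val) ∨
        ((a - b).val < (σ x - b).val ∧ (σ x - b).val < 2 * n) := by
      split_ifs at hno <;> omega
    rcases hQrange with hr | hr | hr
    · -- σ x inside (b → c) : contradiction with closedness
      have := hclosed (σ x) ⟨hr.1, hr.2⟩
      rw [hp.invol] at this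
      obtain ⟨-, h4⟩ := this
      omega
    · -- σ x in (c → d) : crossing with e2 = {c, d}
      have hcr := hS.noncrossing {c, d} he2S {σ x, x}
        (by rw [Finset.pair_comm]; exact hp.mem x)
      rw [crosses_iff hdc.symm (hp.ne x) hsc hsd hxc hxd] at hcr
      refine hcr (Or.inl ⟨⟨?_, ?_⟩, ?_⟩)
      · have e3 : (σ x - c).val = _ := sub_val b (σ x) c
        rw [e3]; split_ifs <;> omega
      · have e3 : (σ x - c).val = _ := sub_val b (σ x) c
        have e4 : (d - c).val = _ := sub_val b d c
        rw [e3, e4]; split_ifs <;> omega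
      · unfold StrictBtw
        have e3 : (x - c).val = _ := sub_val b x c
        have e4 : (d - c).val = _ := sub_val b d c
        rw [e3, e4]; split_ifs <;> omega
    · -- σ x in (a → b) : crossing with e1 = {a, b}
      have hcr := hS.noncrossing {a, b} he1S {σ x, x}
        (by rw [Finset.pair_comm]; exact hp.mem x)
      rw [crosses_iff hab (hp.ne x) hsa hsb hxa hxb] at hcr
      refine hcr (Or.inl ⟨⟨?_, ?_⟩, ?_⟩)
      · have e3 : (σ x - a).val = _ := sub_val b (σ x) a
        rw [e3]; split_ifs <;> omega
      · have e3 : (σ x - a).val = _ := sub_val b (σ x) a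
        have e4 : (b - a).val = _ := sub_val b b a
        rw [sub_self, ZMod.val_zero] at e4
        rw [e3, e4]; split_ifs <;> omega
      · unfold StrictBtw
        have e3 : (x - a).val = _ := sub_val b x a
        have e4 : (b - a).val = _ := sub_val b b a
        rw [sub_self, ZMod.val_zero] at e4
        rw [e3, e4]; split_ifs <;> omega
  -- the new split
  set S' : Finset (Finset (ZMod (2 * n))) := insert {b, c} (insert {a, d} S0) with hS'
  have hmemS' : ∀ f, f ∈ S' ↔ f = {b, c} ∨ f = {a, d} ∨ f ∈ S0 := by
    intro f
    rw [hS', Finset.mem_insert, Finset.mem_insert]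
  have hbcS' : ({b, c} : Finset (ZMod (2 * n))) ∈ S' := by rw [hmemS']; tauto
  have hadS' : ({a, d} : Finset (ZMod (2 * n))) ∈ S' := by rw [hmemS']; tauto
  have hbc_ne_ad : ({b, c} : Finset (ZMod (2 * n))) ≠ {a, d} := by
    intro h
    rcases pair_eq_pair_iff.mp h with ⟨h1, -⟩ | ⟨h1, -⟩
    · exact hab h1.symm
    · exact hdb h1.symm
  -- chords of S0, described by σ
  have hS0chord : ∀ f ∈ S0, ∃ x, f = {x, σ x} := by
    intro f hf
    obtain ⟨hfS, -, -⟩ := hS0mem f hf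
    have hne : f.Nonempty := Finset.card_pos.mp (by rw [hS.card_two f hfS]; omega)
    obtain ⟨x, hx⟩ := hne
    exact ⟨x, hp.eq_of f hfS x hx⟩
  have hS0chord_mem : ∀ x, x ≠ a → x ≠ b → x ≠ c → x ≠ d → {x, σ x} ∈ S0 := by
    intro x h1 h2 h3 h4
    rw [hS0, Finset.mem_erase, Finset.mem_erase]
    refine ⟨?_, ?_, hp.mem x⟩
    · intro h
      have : x ∈ e2 := by rw [← h]; simp
      rw [he2] at this
      rcases mem_pair'.mp this with h' | h'
      · exact h3 h'
      · exact h4 h'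
    · intro h
      have : x ∈ e1 := by rw [← h]; simp
      rw [he1] at this
      rcases mem_pair'.mp this with h' | h'
      · exact h1 h'
      · exact h2 h'
  have hsplitS' : IsSplit n S' := by
    constructor
    · -- card_two
      intro f hf
      rw [hmemS'] at hf
      rcases hf with rfl | rfl | hf
      · exact Finset.card_pair hcb.symm
      · exact Finset.card_pair had
      · exact hS.card_two f (hS0mem f hf).1
    · -- partitions
      intro x
      by_cases hxb : x = b
      · refine ⟨{b, c}, ⟨hbcS', by rw [hxb]; simp⟩, ?_⟩
        rintro f ⟨hf, hxf⟩
        rw [hxb] at hxf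
        rw [hmemS'] at hf
        rcases hf with rfl | rfl | hf
        · rfl
        · rcases mem_pair'.mp hxf with h | h
          · exact absurd h.symm hab
          · exact absurd h.symm hdb
        · exact absurd rfl (havoid f hf b hxf).2.1
      · by_cases hxc : x = c
        · refine ⟨{b, c}, ⟨hbcS', by rw [hxc]; simp⟩, ?_⟩
          rintro f ⟨hf, hxf⟩
          rw [hxc] at hxf
          rw [hmemS'] at hf
          rcases hf with rfl | rfl | hf
          · rfl
          · rcases mem_pair'.mp hxf with h | h
            · exact absurd h.symm hac
            · exact absurd h.symm hdc
          · exact absurd rfl (havoid f hf c hxf).2.2.1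
        · by_cases hxa : x = a
          · refine ⟨{a, d}, ⟨hadS', by rw [hxa]; simp⟩, ?_⟩
            rintro f ⟨hf, hxf⟩
            rw [hxa] at hxf
            rw [hmemS'] at hf
            rcases hf with rfl | rfl | hf
            · rcases mem_pair'.mp hxf with h | h
              · exact absurd h hab
              · exact absurd h hac
            · rfl
            · exact absurd rfl (havoid f hf a hxf).1
          · by_cases hxd : x = d
            · refine ⟨{a, d}, ⟨hadS', by rw [hxd]; simp⟩, ?_⟩
              rintro f ⟨hf, hxf⟩
              rw [hxd] at hxf
              rw [hmemS'] at hf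
              rcases hf with rfl | rfl | hf
              · rcases mem_pair'.mp hxf with h | h
                · exact absurd h hdb
                · exact absurd h hdc
              · rfl
              · exact absurd rfl (havoid f hf d hxf).2.2.2
            · -- generic point
              refine ⟨{x, σ x}, ⟨by rw [hmemS']; exact Or.inr (Or.inr
                  (hS0chord_mem x hxa hxb hxc hxd)), by simp⟩, ?_⟩
              rintro f ⟨hf, hxf⟩
              rw [hmemS'] at hf
              rcases hf with rfl | rfl | hf
              · rcases mem_pair'.mp hxf with h | h
                · exact absurd h hxb
                · exact absurd h hxc
              · rcases mem_pair'.mp hxf with h | h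
                · exact absurd h hxa
                · exact absurd h hxd
              · exact hp.eq_of f (hS0mem f hf).1 x hxf
    · -- noncrossing
      have hndisj : ∀ u v : ZMod (2 * n), ¬ Disjoint ({u, v} : Finset (ZMod (2 * n))) {u, v} :=
        fun u v h => (Finset.disjoint_left.mp h (Finset.mem_insert_self u {v}))
          (Finset.mem_insert_self u {v})
      have hside_bc_f : ∀ f ∈ S0, ¬ Crosses n {b, c} f ∧ ¬ Crosses n f {b, c} := by
        intro f hf
        obtain ⟨x, rfl⟩ := hS0chord f hf
        have hav1 := havoid _ hf x (by simp)
        have hav2 := havoid _ hf (σ x) (by simp)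
        refine not_crosses_of_same_side hcb.symm (hp.ne x).symm
          hav1.2.1 hav1.2.2.1 hav2.2.1 hav2.2.2.1 ?_
        constructor
        · exact hclosed x
        · intro h
          have := hclosed (σ x) h
          rwa [hp.invol] at this
      have hside_da_f : ∀ f ∈ S0, ¬ Crosses n {d, a} f ∧ ¬ Crosses n f {d, a} := by
        intro f hf
        obtain ⟨x, rfl⟩ := hS0chord f hf
        have hav1 := havoid _ hf x (by simp)
        have hav2 := havoid _ hf (σ x) (by simp)
        refine not_crosses_of_same_side had.symm (hp.ne x).symm
          hav1.2.2.2 hav1.1 hav2.2.2.2 hav2.1 ?_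
        constructor
        · exact hsideDA x hav1.1 hav1.2.1 hav1.2.2.1 hav1.2.2.2
            hav2.1 hav2.2.1 hav2.2.2.1 hav2.2.2.2
        · intro h
          have := hsideDA (σ x) hav2.1 hav2.2.1 hav2.2.2.1 hav2.2.2.2
            (by rw [hp.invol]; exact hav1.1) (by rw [hp.invol]; exact hav1.2.1)
            (by rw [hp.invol]; exact hav1.2.2.1) (by rw [hp.invol]; exact hav1.2.2.2) h
          rwa [hp.invol] at this
      have hbc_ad_side : ¬ Crosses n {b, c} {a, d} ∧ ¬ Crosses n {a, d} {b, c} := by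
        have h := not_crosses_of_same_side hcb.symm had hab hac hdb hdc
          (iff_of_false hnA hnD)
        exact ⟨h.1, h.2⟩
      intro f hf g hg
      rw [hmemS'] at hf hg
      rcases hf with rfl | rfl | hf <;> rcases hg with rfl | rfl | hg
      · exact not_crosses_of_not_disjoint (hndisj b c)
      · exact hbc_ad_side.1
      · exact (hside_bc_f g hg).1
      · exact hbc_ad_side.2
      · exact not_crosses_of_not_disjoint (hndisj a d)
      · rw [Finset.pair_comm]
        exact (hside_da_f g hg).1
      · exact (hside_bc_f f hf).2
      · rw [Finset.pair_comm a d]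
        exact (hside_da_f f hf).2
      · exact hS.noncrossing f (hS0mem f hf).1 g (hS0mem g hg).1
  -- S' is a split move of S
  have hbc_notS : ({b, c} : Finset (ZMod (2 * n))) ∉ S := htS
  have had_notS : ({a, d} : Finset (ZMod (2 * n))) ∉ S := by
    intro h
    have heq := hp.eq_of _ h a (by simp)
    rw [hσa] at heq
    rcases pair_eq_pair_iff.mp heq with ⟨-, h'⟩ | ⟨h', -⟩
    · exact hdb h'
    · exact hab h'
  have hinter : S ∩ S' = S0 := by
    ext f
    rw [Finset.mem_inter, hmemS' f]
    constructor
    · rintro ⟨hfS, rfl | rfl | hf⟩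
      · exact absurd hfS hbc_notS
      · exact absurd hfS had_notS
      · exact hf
    · intro hf
      exact ⟨(hS0mem f hf).1, Or.inr (Or.inr hf)⟩
  have he2ne1 : e2 ≠ e1 := by
    intro h
    have : c ∈ e1 := by rw [← h, he2]; simp
    rw [he1] at this
    rcases mem_pair'.mp this with h' | h'
    · exact hac h'.symm
    · exact hcb h'
  have hcardint : (S ∩ S').card = n - 2 := by
    have he2mem : e2 ∈ S.erase e1 := Finset.mem_erase.mpr ⟨he2ne1, he2S⟩
    rw [hinter, hS0, Finset.card_erase_of_mem he2mem, Finset.card_erase_of_mem he1S,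
      hS.card_eq]
    omega
  have hSneS' : S ≠ S' := fun h => hbc_notS (h ▸ hbcS')
  have hmove : SplitMove n S S' := ⟨hS, hsplitS', hSneS', hcardint⟩
  -- the component count increases by at least one
  obtain ⟨σ', hp'⟩ := hsplitS'.exists_pairing
  have hσ'b : σ' b = c := (hp'.pair_mem_iff hcb).mp hbcS'
  have hσ'c : σ' c = b := by rw [← hσ'b, hp'.invol]
  have hadjG' := unionGraph_adj hp' hq
  have htrans : ∀ x y, (unionGraph n S' T).Adj x y → (unionGraph n S T).Reachable x y := by
    rintro x y ⟨hxy, f, hf, hx, hy⟩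
    rcases hf with hf | hf
    · rw [hmemS'] at hf
      rcases hf with rfl | rfl | hf
      · exact Adj.reachable ⟨hxy, {b, c}, Or.inr (hq.mem b), hx, hy⟩
      · have r1 : (unionGraph n S T).Adj a b :=
          ⟨hab, e1, Or.inl he1S, by rw [he1]; simp, by rw [he1]; simp⟩
        have r2 : (unionGraph n S T).Adj b c :=
          ⟨fun h => hcb h.symm, {b, c}, Or.inr (hq.mem b), by simp, by simp⟩
        have r3 : (unionGraph n S T).Adj c d :=
          ⟨fun h => hdc h.symm, e2, Or.inl he2S, by rw [he2]; simp, by rw [he2]; simp⟩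
        have rad : (unionGraph n S T).Reachable a d :=
          r1.reachable.trans (r2.reachable.trans r3.reachable)
        rcases mem_pair'.mp hx with rfl | rfl <;> rcases mem_pair'.mp hy with rfl | rfl
        · exact absurd rfl hxy
        · exact rad
        · exact rad.symm
        · exact absurd rfl hxy
      · exact Adj.reachable ⟨hxy, f, Or.inl (hS0mem f hf).1, hx, hy⟩
    · exact Adj.reachable ⟨hxy, f, Or.inr hf, hx, hy⟩
  have hbc_closed : ∀ u v, u ∈ ({b, c} : Set (ZMod (2 * n))) →
      (unionGraph n S' T).Adj u v → v ∈ ({b, c} : Set (ZMod (2 * n))) := by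
    intro u v hu hadj
    rw [hadjG'] at hadj
    obtain ⟨huv, h | h⟩ := hadj
    · simp only [Set.mem_insert_iff, Set.mem_singleton_iff] at hu ⊢
      rcases hu with rfl | rfl
      · exact Or.inr (by rw [← h, hσ'b])
      · exact Or.inl (by rw [← h, hσ'c])
    · simp only [Set.mem_insert_iff, Set.mem_singleton_iff] at hu ⊢
      rcases hu with rfl | rfl
      · exact Or.inr (by rw [← h, ← hc])
      · exact Or.inl (by rw [← h, hτc])
  have hmk_ne : (unionGraph n S' T).connectedComponentMk b ≠
      (unionGraph n S' T).connectedComponentMk a := by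
    intro h
    have hr := ConnectedComponent.eq.mp h
    have := reach_subset_closed hbc_closed (Set.mem_insert b _) hr
    simp only [Set.mem_insert_iff, Set.mem_singleton_iff] at this
    rcases this with h' | h'
    · exact hab h'
    · exact hac h'
  have hmk_eq : compMap (unionGraph n S T) (unionGraph n S' T) htrans
      ((unionGraph n S' T).connectedComponentMk b) =
      compMap (unionGraph n S T) (unionGraph n S' T) htrans
      ((unionGraph n S' T).connectedComponentMk a) := by
    rw [compMap_mk, compMap_mk]
    refine ConnectedComponent.sound ?_
    refine Reachable.symm (Adj.reachable ?_)
    exact ⟨hab, e1, Or.inl he1S, by rw [he1]; simp, by rw [he1]; simp⟩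
  have hnotinj : ¬ Function.Injective
      (compMap (unionGraph n S T) (unionGraph n S' T) htrans) :=
    fun hinj => hmk_ne (hinj hmk_eq)
  letI : Fintype (unionGraph n S T).ConnectedComponent := Fintype.ofFinite _
  letI : Fintype (unionGraph n S' T).ConnectedComponent := Fintype.ofFinite _
  have hlt := Fintype.card_lt_of_surjective_not_injective _
    (compMap_surj (unionGraph n S T) (unionGraph n S' T) htrans) hnotinj
  refine ⟨S', hmove, ?_⟩
  rw [Nat.card_eq_fintype_card, Nat.card_eq_fintype_card]
  omega





end Construct


section Main

open SimpleGraph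

variable {n : ℕ} [NeZero (2 * n)] {S T : Finset (Finset (ZMod (2 * n)))}

lemma comp_le_n' (hS : IsSplit n S) (hT : IsSplit n T) :
    Nat.card (unionGraph n S T).ConnectedComponent ≤ n := by
  obtain ⟨σ, hp⟩ := hS.exists_pairing
  obtain ⟨τ, hq⟩ := hT.exists_pairing
  exact comp_le_n hp hq

lemma chain_lower (hn : 2 ≤ n) (hT : IsSplit n T) :
    ∀ k (S : Finset (Finset (ZMod (2 * n)))), IsSplit n S →
      ChainLen (SplitMove n) k S T →
      n ≤ Nat.card (unionGraph n S T).ConnectedComponent + k := by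
  intro k
  induction k with
  | zero =>
    intro S hS hch
    have hST : S = T := hch
    subst hST
    rw [comp_self_eq hT]
    omega
  | succ k ih =>
    rintro S hS ⟨S₁, hmv, hch⟩
    have h1 := splitMove_comp_le hn hmv hT
    have h2 := ih S₁ hmv.2.1 hch
    omega

lemma chain_upper (hn : 2 ≤ n) (hT : IsSplit n T) :
    ∀ k (S : Finset (Finset (ZMod (2 * n)))), IsSplit n S →
      n - Nat.card (unionGraph n S T).ConnectedComponent = k →
      ChainLen (SplitMove n) k S T := by
  intro k
  induction k with
  | zero =>
    intro S hS h0
    have hle := comp_le_n' hS hT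
    have : Nat.card (unionGraph n S T).ConnectedComponent = n := by omega
    have hST : S = T := eq_of_comp_eq_n hS hT this
    exact hST
  | succ k ih =>
    intro S hS hk
    have hle := comp_le_n' hS hT
    have hne : S ≠ T := by
      intro h
      subst h
      rw [comp_self_eq hT] at hk
      omega
    obtain ⟨S', hmv, hinc⟩ := exists_good_move hn hS hT hne
    have hub := splitMove_comp_le hn hmv hT
    have hS' := hmv.2.1
    have hle' := comp_le_n' hS' hT
    exact ⟨S', hmv, ih S' hS' (by omega)⟩

end Main


/-- For every `n ≥ 2` and any splits `S` and `T` of the same `2n` points, the split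
distance satisfies `d(S,T) = n - ‖S,T‖`. -/
theorem splitDist_eq (n : ℕ) (hn : 2 ≤ n)
    (S T : Finset (Finset (ZMod (2 * n)))) (hS : IsSplit n S) (hT : IsSplit n T) :
    splitDist n S T = n - circleCount n S T := by
  haveI : NeZero (2 * n) := ⟨by omega⟩
  have hmem : ChainLen (SplitMove n) (n - circleCount n S T) S T :=
    chain_upper hn hT _ S hS rfl
  have hle : splitDist n S T ≤ n - circleCount n S T := Nat.sInf_le hmem
  have hinf_mem : splitDist n S T ∈ {k | ChainLen (SplitMove n) k S T} :=
    Nat.sInf_mem (⟨_, hmem⟩ : {k | ChainLen (SplitMove n) k S T}.Nonempty)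
  have hlow := chain_lower hn hT (splitDist n S T) S hS hinf_mem
  have hcc : circleCount n S T = Nat.card (unionGraph n S T).ConnectedComponent := rfl
  omega

end MultiCrossing
end
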